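/- arXiv:2104.12598 — 5 statements merged into one kernel-verified Lean document; each statement's English description precedes it below -/
import Mathlib

section
/- Fix L > 1/2. There exist r₀ ∈ (0,1), constants C_L, C > 0, and for each integer α ≥ 1 a constant c_{L,α} > 0, such that for all r ∈ [r₀,1) and all integers α ≥ 1: c_{L,α}·(1−r) ≤ ∫_{−π}^{π} |(1−r²)/(1−r²e^{iθ})|^{2αL} · |(1−e^{iθ})/(1−r²e^{iθ})|² dθ ≤ C_L·α^{−3/2}·(1−r) + (C·(1−r))^{2αL}. -/
open Filter Complex

set_option maxHeartbeats 2000000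

noncomputable section

lemma sq_abs_aux (s θ : ℝ) :
    ‖1 - (s:ℂ) * Complex.exp (θ * I)‖ ^ 2
      = (1-s)^2 + 2*s*(1 - Real.cos θ) := by
  rw [Complex.sq_norm, Complex.normSq_apply]
  simp [Complex.exp_mul_I, Complex.cos_ofReal_re, Complex.sin_ofReal_re]
  linear_combination (s^2) * Real.sin_sq_add_cos_sq θ

lemma abs_denom_ne (s θ : ℝ) (h0 : 0 ≤ s) (h1 : s < 1) :
    (1 : ℂ) - (s:ℂ) * Complex.exp (θ * I) ≠ 0 := by
  intro h
  have h2 : (1:ℂ) = (s:ℂ) * Complex.exp (θ * I) := by linear_combination h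
  have h3 := congrArg (‖·‖) h2
  simp [Complex.norm_exp, _root_.abs_of_nonneg h0] at h3
  rw [h3] at h1; linarith

lemma real_aux (x A B D N β : ℝ) (hβ : 0 ≤ β) (hx : 0 ≤ x) (hA : 0 < A)
    (hA2 : A^2 = D) (hB2 : B^2 = N) :
    (x/A)^(2*β) * (B/A)^2 = (x^2/D)^β * (N/D) := by
  rw [show (2:ℝ)*β = ((2:ℕ):ℝ)*β by norm_num, Real.rpow_mul (by positivity : (0:ℝ) ≤ x/A), Real.rpow_natCast, div_pow, div_pow, hA2, hB2]

lemma integrand_eq (r θ β : ℝ) (hβ : 0 ≤ β) (hr0 : 0 ≤ r) (hr1 : r < 1) :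
    ‖(1 - (r:ℂ)^2) / (1 - (r:ℂ)^2 * Complex.exp (θ * I))‖ ^ (2*β) *
      ‖(1 - Complex.exp (θ * I)) / (1 - (r:ℂ)^2 * Complex.exp (θ * I))‖ ^ 2
    = ((1-r^2)^2 / ((1-r^2)^2 + 2*r^2*(1 - Real.cos θ)))^β *
        (2*(1 - Real.cos θ) / ((1-r^2)^2 + 2*r^2*(1 - Real.cos θ))) := by
  have hs0 : (0:ℝ) ≤ r^2 := sq_nonneg r
  have hs1 : r^2 < 1 := by nlinarith
  have hcast : ((r:ℂ)^2) = ((r^2 : ℝ) : ℂ) := by push_cast; ring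
  have hA2 : ‖1 - (r:ℂ)^2 * Complex.exp (θ * I)‖ ^ 2
      = (1-r^2)^2 + 2*r^2*(1 - Real.cos θ) := by
    rw [hcast]; exact sq_abs_aux (r^2) θ
  have hB2 : ‖1 - Complex.exp (θ * I)‖ ^ 2 = 2*(1 - Real.cos θ) := by
    have := sq_abs_aux 1 θ; simpa using this
  have hApos : 0 < ‖1 - (r:ℂ)^2 * Complex.exp (θ * I)‖ := by
    refine norm_pos_iff.mpr ?_
    rw [hcast]; exact abs_denom_ne (r^2) θ hs0 hs1
  have habs1 : ‖1 - (r:ℂ)^2‖ = 1 - r^2 := by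
    rw [hcast, show (1:ℂ) - ((r^2:ℝ):ℂ) = (((1 - r^2 : ℝ)):ℂ) by push_cast; ring,
      Complex.norm_real, Real.norm_eq_abs, _root_.abs_of_nonneg (by linarith)]
  rw [norm_div, norm_div, habs1]
  exact real_aux _ _ _ _ _ β hβ (by linarith) hApos hA2 hB2

noncomputable def g8 (ε s β θ : ℝ) : ℝ :=
  (ε^2 / (ε^2 + 2*s*(1 - Real.cos θ)))^β *
    (2*(1 - Real.cos θ) / (ε^2 + 2*s*(1 - Real.cos θ)))

lemma D_pos {ε s : ℝ} (hε : ε ≠ 0) (hs : 0 ≤ s) (θ : ℝ) :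
    0 < ε^2 + 2*s*(1 - Real.cos θ) := by
  have h1 : 0 < ε^2 := by positivity
  nlinarith [Real.cos_le_one θ, mul_nonneg hs (sub_nonneg.2 (Real.cos_le_one θ))]

lemma g8_nonneg {ε s β : ℝ} (hε : ε ≠ 0) (hs : 0 ≤ s) (θ : ℝ) :
    0 ≤ g8 ε s β θ := by
  have h1 := D_pos hε hs θ
  have h2 := Real.cos_le_one θ
  unfold g8
  apply mul_nonneg (Real.rpow_nonneg (by positivity) _)
  apply div_nonneg (by linarith) h1.le

lemma g8_cont {ε s β : ℝ} (hε : ε ≠ 0) (hs : 0 ≤ s) (hβ : 0 ≤ β) :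
    Continuous (g8 ε s β) := by
  have hD : ∀ θ, ε^2 + 2*s*(1 - Real.cos θ) ≠ 0 := fun θ => (D_pos hε hs θ).ne'
  apply Continuous.mul
  · exact (Continuous.div (by fun_prop) (by fun_prop) hD).rpow_const (fun θ => Or.inr hβ)
  · exact Continuous.div (by fun_prop) (by fun_prop) hD

lemma g8_even (ε s β θ : ℝ) : g8 ε s β (-θ) = g8 ε s β θ := by
  simp [g8, Real.cos_neg]

lemma one_sub_cos_lb {θ : ℝ} (h0 : 0 ≤ θ) (h1 : θ ≤ Real.pi) :
    θ^2/5 ≤ 1 - Real.cos θ := by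
  have hπ : Real.pi ≤ 3.15 := by linarith [Real.pi_lt_d2]
  have hπ0 := Real.pi_pos
  have hs : θ/Real.pi ≤ Real.sin (θ/2) := by
    have := Real.mul_le_sin (x := θ/2) (by linarith) (by linarith)
    calc θ/Real.pi = 2/Real.pi * (θ/2) := by ring
    _ ≤ _ := this
  have hsq : (θ/Real.pi)^2 ≤ Real.sin (θ/2)^2 :=
    pow_le_pow_left₀ (by positivity) hs 2
  have hid : Real.sin (θ/2)^2 = 1/2 - Real.cos θ / 2 := by
    have := Real.sin_sq_eq_half_sub (θ/2)
    rwa [show 2*(θ/2) = θ by ring] at this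
  rw [hid] at hsq
  have h10 : Real.pi^2 ≤ 10 := by nlinarith
  have : θ^2/10 ≤ (θ/Real.pi)^2 := by
    rw [div_pow, div_le_div_iff₀ (by norm_num) (by positivity)]
    nlinarith [sq_nonneg θ]
  linarith

lemma one_sub_cos_ub (θ : ℝ) : 1 - Real.cos θ ≤ θ^2/2 := by
  have := Real.one_sub_sq_div_two_le_cos (x := θ)
  linarith

section bounds
variable {L β ε s : ℝ} (hL : 1/2 < L) (hβL : L ≤ β) (hε : 0 < ε)
  (hε' : ε ≤ 9/25) (hs : 1/2 ≤ s) (hs1 : s ≤ 1)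

-- global small bound
include hL hβL hε hs in
lemma g8_le_sq (θ : ℝ) : g8 ε s β θ ≤ θ^2/ε^2 := by
  have hD := D_pos hε.ne' (by linarith : (0:ℝ) ≤ s) θ
  have hc0 : 0 ≤ 1 - Real.cos θ := sub_nonneg.2 (Real.cos_le_one θ)
  have hβ0 : 0 ≤ β := by linarith
  have h1 : (ε^2 / (ε^2 + 2*s*(1 - Real.cos θ)))^β ≤ 1 := by
    apply Real.rpow_le_one (by positivity) _ hβ0
    rw [div_le_one hD]
    nlinarith
  have h2 : 2*(1 - Real.cos θ) / (ε^2 + 2*s*(1 - Real.cos θ)) ≤ θ^2/ε^2 := by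
    apply div_le_div₀ (by positivity) _ (by positivity) _
    · linarith [one_sub_cos_ub θ]
    · nlinarith
  calc g8 ε s β θ ≤ 1 * (θ^2/ε^2) := by
        apply mul_le_mul h1 h2 (by positivity) (by norm_num)
    _ = θ^2/ε^2 := one_mul _

-- intermediate bound: g ≤ (ε²/E)^β * θ²/E  with E = ε² + θ²/5
include hL hβL hε hs hs1 in
lemma g8_le_E {θ : ℝ} (h0 : 0 ≤ θ) (h1 : θ ≤ Real.pi) :
    g8 ε s β θ ≤ (ε^2/(ε^2 + θ^2/5))^β * (θ^2/(ε^2 + θ^2/5)) := by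
  have hc0 : 0 ≤ 1 - Real.cos θ := sub_nonneg.2 (Real.cos_le_one θ)
  have hclb := one_sub_cos_lb h0 h1
  have hcub := one_sub_cos_ub θ
  have hE : 0 < ε^2 + θ^2/5 := by positivity
  have hED : ε^2 + θ^2/5 ≤ ε^2 + 2*s*(1 - Real.cos θ) := by nlinarith
  have hD := D_pos hε.ne' (by linarith : (0:ℝ) ≤ s) θ
  have hβ0 : (0:ℝ) ≤ β := by linarith
  apply mul_le_mul
  · apply Real.rpow_le_rpow (by positivity) _ hβ0
    exact div_le_div_of_nonneg_left (by positivity) hE hED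
  · apply div_le_div₀ (by positivity) (by linarith) hE hED
  · apply div_nonneg (by linarith) hD.le
  · positivity

include hL hβL hε hs hs1 in
lemma g8_tail_big (hβ4 : 4 ≤ β) {θ : ℝ} (h0 : 0 < θ) (h1 : θ ≤ Real.pi) :
    g8 ε s β θ ≤ 3375*ε^4/(β^3*θ^4) := by
  refine (g8_le_E hL hβL hε hs hs1 h0.le h1).trans ?_
  set x : ℝ := θ^2/(5*ε^2) with hxdef
  have hx : 0 < x := by positivity
  have hE : ε^2 + θ^2/5 = ε^2*(1+x) := by rw [hxdef]; field_simp
  have hbern : (β*x/3)^3 ≤ (1+x)^(β+1) := by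
    have h1' : 1 + (β+1)/3 * x ≤ (1+x)^((β+1)/3) :=
      one_add_mul_self_le_rpow_one_add (by linarith) (by linarith)
    have h2' : β*x/3 ≤ (1+x)^((β+1)/3) := by nlinarith
    have h3' : (β*x/3)^3 ≤ ((1+x)^((β+1)/3))^3 :=
      pow_le_pow_left₀ (by positivity) h2' 3
    refine h3'.trans_eq ?_
    rw [← Real.rpow_natCast ((1+x)^((β+1)/3)) 3, ← Real.rpow_mul (by positivity)]
    norm_num
  have hfrac : ε^2/(ε^2 + θ^2/5) = 1/(1+x) := by
    rw [hE]; field_simp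
  rw [hfrac, hE]
  have hrp : (1/(1+x))^β = 1/(1+x)^β := by
    rw [Real.div_rpow (by norm_num) (by positivity), Real.one_rpow]
  rw [hrp]
  have key : 1/(1+x)^β * (θ^2/(ε^2*(1+x))) = θ^2/(ε^2*(1+x)^(β+1)) := by
    rw [Real.rpow_add_one (by positivity : (1+x) ≠ 0)]
    field_simp
  rw [key]
  calc θ^2/(ε^2*(1+x)^(β+1)) ≤ θ^2/(ε^2*(β*x/3)^3) := by
        apply div_le_div_of_nonneg_left (by positivity) (by positivity)
        have : 0 < (β*x/3)^3 := by positivity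
        apply mul_le_mul_of_nonneg_left hbern (by positivity)
    _ = 3375*ε^4/(β^3*θ^4) := by
        rw [hxdef]; field_simp; ring

include hL hβL hε hs hs1 in
lemma g8_tail_small {θ : ℝ} (h0 : 0 < θ) (h1 : θ ≤ Real.pi) :
    g8 ε s β θ ≤ (5:ℝ)^(L+1) * (ε^2)^L * θ^(-(2*L)) := by
  refine (g8_le_E hL hβL hε hs hs1 h0.le h1).trans ?_
  have hE : 0 < ε^2 + θ^2/5 := by positivity
  have hL0 : (0:ℝ) ≤ L := by linarith
  have hEθ : θ^2/5 ≤ ε^2 + θ^2/5 := by nlinarith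
  have hb1 : (ε^2/(ε^2 + θ^2/5))^β ≤ (ε^2/(ε^2 + θ^2/5))^L :=
    Real.rpow_le_rpow_of_exponent_ge (by positivity)
      (by rw [div_le_one hE]; nlinarith) hβL
  have hb2 : (ε^2/(ε^2 + θ^2/5))^L ≤ (ε^2/(θ^2/5))^L := by
    apply Real.rpow_le_rpow (by positivity) _ hL0
    exact div_le_div_of_nonneg_left (by positivity) (by positivity) hEθ
  have hb3 : θ^2/(ε^2 + θ^2/5) ≤ 5 := by
    rw [div_le_iff₀ hE]; nlinarith
  calc (ε^2/(ε^2 + θ^2/5))^β * (θ^2/(ε^2 + θ^2/5))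
      ≤ (ε^2/(θ^2/5))^L * 5 := by
        apply mul_le_mul (hb1.trans hb2) hb3 _ (by positivity)
        positivity
    _ = (5:ℝ)^(L+1) * (ε^2)^L * θ^(-(2*L)) := by
        rw [show ε^2/(θ^2/5) = 5*ε^2/θ^2 by ring,
          Real.div_rpow (by positivity) (by positivity),
          Real.mul_rpow (by norm_num) (by positivity),
          Real.rpow_add_one (by norm_num : (5:ℝ) ≠ 0) L]
        rw [show θ^2 = θ^((2:ℕ):ℝ) by rw [Real.rpow_natCast],
          ← Real.rpow_mul h0.le, Real.rpow_neg h0.le]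
        push_cast
        field_simp

set_option maxHeartbeats 1000000 in
include hL hβL hε hε' hs hs1 in
lemma upper_half :
    ∫ θ in (0:ℝ)..Real.pi, g8 ε s β θ
      ≤ (144 + 8/3 + 8*(5:ℝ)^(L+1)/(2*L-1)) * (ε * β^(-(3/2):ℝ)) := by
  have hβ0 : (0:ℝ) < β := by linarith
  have hπ := Real.pi_gt_three
  have hs0 : (0:ℝ) ≤ s := by linarith
  have hInt : ∀ a b : ℝ, IntervalIntegrable (g8 ε s β) MeasureTheory.volume a b :=
    fun a b => (g8_cont hε.ne' hs0 (by linarith)).intervalIntegrable a b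
  have h5pos : (0:ℝ) < (5:ℝ)^(L+1) := Real.rpow_pos_of_pos (by norm_num) _
  have hLpos : (0:ℝ) < 2*L-1 := by linarith
  have hBpos : (0:ℝ) < β^(-(3/2):ℝ) := Real.rpow_pos_of_pos hβ0 _
  rcases le_or_gt 4 β with hβ4 | hβ4
  · -- large β
    set b : ℝ := 2*ε*β^(-(1/2):ℝ) with hbdef
    have hb2pos : (0:ℝ) < β^(-(1/2):ℝ) := Real.rpow_pos_of_pos hβ0 _
    have hb0 : 0 < b := by positivity
    have h412 : (4:ℝ)^((1:ℝ)/2) = 2 := by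
      rw [show (4:ℝ) = 2^(2:ℕ) by norm_num, ← Real.rpow_natCast 2 2,
        ← Real.rpow_mul (by norm_num)]
      norm_num
    have hbhalf : β^(-(1/2):ℝ) ≤ 1/2 := by
      have h2' : (4:ℝ)^((1:ℝ)/2) ≤ β^((1:ℝ)/2) :=
        Real.rpow_le_rpow (by norm_num) hβ4 (by norm_num)
      have h2 : (2:ℝ) ≤ β^((1:ℝ)/2) := by rw [h412] at h2'; exact h2'
      have hpos : 0 < β^((1:ℝ)/2) := Real.rpow_pos_of_pos hβ0 _
      rw [Real.rpow_neg hβ0.le, inv_le_comm₀ hpos (by norm_num)]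
      norm_num
      linarith
    have hbπ : b ≤ Real.pi := by
      have h2e : 0 ≤ 2*ε := by positivity
      have := mul_le_mul_of_nonneg_left hbhalf h2e
      rw [hbdef]; nlinarith
    have hcube : (β^(-(1/2):ℝ))^(3:ℕ) = β^(-(3/2):ℝ) := by
      rw [← Real.rpow_natCast (β^(-(1/2):ℝ)) 3, ← Real.rpow_mul hβ0.le]
      norm_num
    have hb3 : b^3 = 8*ε^3*β^(-(3/2):ℝ) := by
      rw [hbdef, mul_pow, mul_pow, hcube]; ring
    have hsplit := intervalIntegral.integral_add_adjacent_intervals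
      (hInt 0 b) (hInt b Real.pi)
    rw [← hsplit]
    -- piece 1
    have hp1 : ∫ θ in (0:ℝ)..b, g8 ε s β θ ≤ (8/3) * (ε * β^(-(3/2):ℝ)) := by
      have hmono : ∫ θ in (0:ℝ)..b, g8 ε s β θ ≤ ∫ θ in (0:ℝ)..b, θ^2/ε^2 := by
        apply intervalIntegral.integral_mono_on hb0.le (hInt 0 b)
          (by apply Continuous.intervalIntegrable; fun_prop)
        intro θ _
        exact g8_le_sq hL hβL hε hs θ
      have hcomp : ∫ θ in (0:ℝ)..b, θ^2/ε^2 = b^3/(3*ε^2) := by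
        rw [intervalIntegral.integral_div, integral_pow]
        norm_num; ring
      rw [hcomp] at hmono
      refine hmono.trans ?_
      rw [hb3]
      have : 8*ε^3*β^(-(3/2):ℝ)/(3*ε^2) = 8/3*(ε*β^(-(3/2):ℝ)) := by
        field_simp
      rw [this]
    -- piece 2
    have hp2 : ∫ θ in b..Real.pi, g8 ε s β θ ≤ (3375/24) * (ε * β^(-(3/2):ℝ)) := by
      have hcont2 : ContinuousOn (fun θ : ℝ => 3375*ε^4/β^3 * θ^(-(4:ℝ)))
          (Set.uIcc b Real.pi) := by
        apply ContinuousOn.mul continuousOn_const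
        apply ContinuousOn.rpow_const continuousOn_id
        intro x hx
        rw [Set.uIcc_of_le hbπ] at hx
        exact Or.inl (ne_of_gt (lt_of_lt_of_le hb0 hx.1))
      have hmono : ∫ θ in b..Real.pi, g8 ε s β θ
          ≤ ∫ θ in b..Real.pi, 3375*ε^4/β^3 * θ^(-(4:ℝ)) := by
        apply intervalIntegral.integral_mono_on hbπ (hInt b Real.pi)
          (hcont2.intervalIntegrable)
        intro θ hθ
        have hθ0 : 0 < θ := lt_of_lt_of_le hb0 hθ.1
        have := g8_tail_big hL hβL hε hs hs1 hβ4 hθ0 hθ.2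
        refine this.trans_eq ?_
        rw [Real.rpow_neg hθ0.le, show ((4:ℝ)) = ((4:ℕ):ℝ) by norm_num,
          Real.rpow_natCast]
        field_simp
      refine hmono.trans ?_
      rw [intervalIntegral.integral_const_mul, integral_rpow (Or.inr ⟨by norm_num, by
        rw [Set.uIcc_of_le hbπ]; rintro ⟨h1, h2⟩; linarith⟩)]
      have hπ3 : (0:ℝ) ≤ Real.pi^(-(4:ℝ)+1) := Real.rpow_nonneg (by linarith) _
      have hbneg : b^(-(4:ℝ)+1) = (b^3)⁻¹ := by
        rw [show (-(4:ℝ)+1) = -((3:ℕ):ℝ) by norm_num, Real.rpow_neg hb0.le,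
          Real.rpow_natCast]
      have hstep : (Real.pi^(-(4:ℝ)+1) - b^(-(4:ℝ)+1))/(-(4:ℝ)+1) ≤ (b^3)⁻¹/3 := by
        have heq : (Real.pi^(-(4:ℝ)+1) - b^(-(4:ℝ)+1))/(-(4:ℝ)+1)
            = (b^(-(4:ℝ)+1) - Real.pi^(-(4:ℝ)+1))/3 := by
          rw [div_eq_div_iff (by norm_num) (by norm_num)]; ring
        rw [heq, hbneg]
        set X := Real.pi ^ (-(4:ℝ)+1) with hX
        have hq : (0:ℝ) ≤ X := Real.rpow_nonneg (by positivity) _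
        linarith
      calc 3375*ε^4/β^3 * ((Real.pi^(-(4:ℝ)+1) - b^(-(4:ℝ)+1))/(-(4:ℝ)+1))
          ≤ 3375*ε^4/β^3 * ((b^3)⁻¹/3) := by
            apply mul_le_mul_of_nonneg_left hstep (by positivity)
        _ = (3375/24) * (ε * β^(-(3/2):ℝ)) := by
            rw [hb3]
            have h1 : (β^(-(3/2):ℝ))⁻¹ = β^((3:ℝ)/2) := by
              rw [show (-(3/2):ℝ) = -((3:ℝ)/2) by norm_num, Real.rpow_neg hβ0.le, inv_inv]
            have h3 : β^((3:ℝ)/2) = β^(3:ℕ) * β^(-(3/2):ℝ) := by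
              rw [← Real.rpow_natCast β 3, ← Real.rpow_add hβ0]
              norm_num
            rw [mul_inv, mul_inv, h1, h3]
            field_simp
            ring
    have : (8:ℝ)/3 + 3375/24 ≤ 144 + 8/3 + 8*(5:ℝ)^(L+1)/(2*L-1) := by
      have : 0 ≤ 8*(5:ℝ)^(L+1)/(2*L-1) := by positivity
      linarith
    nlinarith [mul_pos hε hBpos]
  · -- small β
    have hεπ : ε ≤ Real.pi := by linarith
    have hsplit := intervalIntegral.integral_add_adjacent_intervals
      (hInt 0 ε) (hInt ε Real.pi)
    rw [← hsplit]
    have hp1 : ∫ θ in (0:ℝ)..ε, g8 ε s β θ ≤ ε/3 := by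
      have hmono : ∫ θ in (0:ℝ)..ε, g8 ε s β θ ≤ ∫ θ in (0:ℝ)..ε, θ^2/ε^2 := by
        apply intervalIntegral.integral_mono_on hε.le (hInt 0 ε)
          (by apply Continuous.intervalIntegrable; fun_prop)
        intro θ _
        exact g8_le_sq hL hβL hε hs θ
      have hcomp : ∫ θ in (0:ℝ)..ε, θ^2/ε^2 = ε/3 := by
        rw [intervalIntegral.integral_div, integral_pow]
        field_simp
        ring
      rwa [hcomp] at hmono
    have hp2 : ∫ θ in ε..Real.pi, g8 ε s β θ ≤ (5:ℝ)^(L+1)*ε/(2*L-1) := by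
      have hcont2 : ContinuousOn (fun θ : ℝ => (5:ℝ)^(L+1) * (ε^2)^L * θ^(-(2*L)))
          (Set.uIcc ε Real.pi) := by
        apply ContinuousOn.mul continuousOn_const
        apply ContinuousOn.rpow_const continuousOn_id
        intro x hx
        rw [Set.uIcc_of_le hεπ] at hx
        exact Or.inl (ne_of_gt (lt_of_lt_of_le hε hx.1))
      have hmono : ∫ θ in ε..Real.pi, g8 ε s β θ
          ≤ ∫ θ in ε..Real.pi, (5:ℝ)^(L+1) * (ε^2)^L * θ^(-(2*L)) := by
        apply intervalIntegral.integral_mono_on hεπ (hInt ε Real.pi)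
          (hcont2.intervalIntegrable)
        intro θ hθ
        have hθ0 : 0 < θ := lt_of_lt_of_le hε hθ.1
        exact g8_tail_small hL hβL hε hs hs1 hθ0 hθ.2
      refine hmono.trans ?_
      rw [intervalIntegral.integral_const_mul, integral_rpow (Or.inr ⟨by
          intro h
          have : L = 1/2 := by linarith [neg_injective h]
          linarith, by
        rw [Set.uIcc_of_le hεπ]; rintro ⟨h1, h2⟩; linarith⟩)]
      have hπ3 : (0:ℝ) ≤ Real.pi^(-(2*L)+1) := Real.rpow_nonneg (by linarith) _
      have hεL : (0:ℝ) < ε^(-(2*L)+1) := Real.rpow_pos_of_pos hε _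
      have hstep : (Real.pi^(-(2*L)+1) - ε^(-(2*L)+1))/(-(2*L)+1)
          ≤ ε^(-(2*L)+1)/(2*L-1) := by
        have heq : (Real.pi^(-(2*L)+1) - ε^(-(2*L)+1))/(-(2*L)+1)
            = (ε^(-(2*L)+1) - Real.pi^(-(2*L)+1))/(2*L-1) := by
          rw [div_eq_div_iff (by linarith) (by linarith)]
          ring
        rw [heq]
        gcongr
        linarith
      have hee : (5:ℝ)^(L+1) * (ε^2)^L * (ε^(-(2*L)+1)/(2*L-1))
          = (5:ℝ)^(L+1)*ε/(2*L-1) := by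
        have h1 : (ε^2)^L * ε^(-(2*L)+1) = ε := by
          rw [← Real.rpow_natCast ε 2, ← Real.rpow_mul hε.le, ← Real.rpow_add hε]
          norm_num
        rw [show (5:ℝ)^(L+1) * (ε^2)^L * (ε^(-(2*L)+1)/(2*L-1))
            = (5:ℝ)^(L+1) * ((ε^2)^L * ε^(-(2*L)+1))/(2*L-1) by ring, h1]
      calc (5:ℝ)^(L+1) * (ε^2)^L
            * ((Real.pi^(-(2*L)+1) - ε^(-(2*L)+1))/(-(2*L)+1))
          ≤ (5:ℝ)^(L+1) * (ε^2)^L * (ε^(-(2*L)+1)/(2*L-1)) := by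
            apply mul_le_mul_of_nonneg_left hstep (by positivity)
        _ = (5:ℝ)^(L+1)*ε/(2*L-1) := hee
    -- combine small β case
    have h432 : (4:ℝ)^((3:ℝ)/2) = 8 := by
      rw [show (4:ℝ) = 2^(2:ℕ) by norm_num, ← Real.rpow_natCast 2 2,
        ← Real.rpow_mul (by norm_num), show ((2:ℕ):ℝ)*(3/2) = ((3:ℕ):ℝ) by norm_num,
        Real.rpow_natCast]
      norm_num
    have hβ8 : (1:ℝ)/8 ≤ β^(-(3/2):ℝ) := by
      have h8 : β^((3:ℝ)/2) ≤ 8 := by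
        rw [← h432]; exact Real.rpow_le_rpow hβ0.le hβ4.le (by norm_num)
      have hpos : 0 < β^((3:ℝ)/2) := Real.rpow_pos_of_pos hβ0 _
      rw [show (-(3/2):ℝ) = -((3:ℝ)/2) by norm_num, Real.rpow_neg hβ0.le,
        le_inv_comm₀ (by norm_num) hpos]
      norm_num
      linarith
    have hkey : ε/3 + (5:ℝ)^(L+1)*ε/(2*L-1)
        = (8/3 + 8*(5:ℝ)^(L+1)/(2*L-1))*(ε*(1/8)) := by
      field_simp
    have hmid : (8/3 + 8*(5:ℝ)^(L+1)/(2*L-1))*(ε*(1/8))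
        ≤ (8/3 + 8*(5:ℝ)^(L+1)/(2*L-1))*(ε*β^(-(3/2):ℝ)) := by
      apply mul_le_mul_of_nonneg_left _ (by positivity)
      exact mul_le_mul_of_nonneg_left hβ8 hε.le
    have hfin : 0 ≤ 144*(ε*β^(-(3/2):ℝ)) := by positivity
    have hexp : (144 + 8/3 + 8*(5:ℝ)^(L+1)/(2*L-1)) * (ε * β^(-(3/2):ℝ))
        = (8/3 + 8*(5:ℝ)^(L+1)/(2*L-1))*(ε*β^(-(3/2):ℝ)) + 144*(ε*β^(-(3/2):ℝ)) := by
      ring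
    rw [hexp]
    linarith [hp1, hp2, hkey, hmid, hfin]
include hL hβL hε hε' hs hs1 in
lemma upper_full :
    ∫ θ in (-Real.pi)..Real.pi, g8 ε s β θ
      ≤ 2*(144 + 8/3 + 8*(5:ℝ)^(L+1)/(2*L-1)) * (ε * β^(-(3/2):ℝ)) := by
  have hs0 : (0:ℝ) ≤ s := by linarith
  have hβ0 : (0:ℝ) ≤ β := by linarith
  have hInt : ∀ a b : ℝ, IntervalIntegrable (g8 ε s β) MeasureTheory.volume a b :=
    fun a b => (g8_cont hε.ne' hs0 hβ0).intervalIntegrable a b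
  have hsplit := intervalIntegral.integral_add_adjacent_intervals
    (hInt (-Real.pi) 0) (hInt 0 Real.pi)
  have hneg : ∫ θ in (-Real.pi)..(0:ℝ), g8 ε s β θ = ∫ θ in (0:ℝ)..Real.pi, g8 ε s β θ := by
    have h := intervalIntegral.integral_comp_neg (a := (0:ℝ)) (b := Real.pi)
      (f := g8 ε s β)
    rw [neg_zero] at h
    rw [← h]
    apply intervalIntegral.integral_congr
    intro θ _
    exact g8_even ε s β θ
  have hh := upper_half hL hβL hε hε' hs hs1
  calc ∫ θ in (-Real.pi)..Real.pi, g8 ε s β θ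
      = (∫ θ in (-Real.pi)..(0:ℝ), g8 ε s β θ) + ∫ θ in (0:ℝ)..Real.pi, g8 ε s β θ :=
        hsplit.symm
    _ = 2 * ∫ θ in (0:ℝ)..Real.pi, g8 ε s β θ := by rw [hneg]; ring
    _ ≤ 2*(144 + 8/3 + 8*(5:ℝ)^(L+1)/(2*L-1)) * (ε * β^(-(3/2):ℝ)) := by
        rw [mul_assoc, show (2:ℝ)*((144 + 8/3 + 8*(5:ℝ)^(L+1)/(2*L-1)) * (ε * β^(-(3/2):ℝ)))
          = 2*((144 + 8/3 + 8*(5:ℝ)^(L+1)/(2*L-1)) * (ε * β^(-(3/2):ℝ))) from rfl]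
        apply mul_le_mul_of_nonneg_left hh (by norm_num)

include hL hβL hε hε' hs hs1 in
lemma lower_full :
    (1/2:ℝ)^β/40 * ε ≤ ∫ θ in (-Real.pi)..Real.pi, g8 ε s β θ := by
  have hs0 : (0:ℝ) ≤ s := by linarith
  have hβ0 : (0:ℝ) ≤ β := by linarith
  have hπ := Real.pi_gt_three
  have hInt : ∀ a b : ℝ, IntervalIntegrable (g8 ε s β) MeasureTheory.volume a b :=
    fun a b => (g8_cont hε.ne' hs0 hβ0).intervalIntegrable a b
  have h1 := intervalIntegral.integral_add_adjacent_intervals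
    (hInt (-Real.pi) (ε/2)) (hInt (ε/2) Real.pi)
  have h2 := intervalIntegral.integral_add_adjacent_intervals
    (hInt (ε/2) ε) (hInt ε Real.pi)
  have hn1 : 0 ≤ ∫ θ in (-Real.pi)..(ε/2), g8 ε s β θ := by
    apply intervalIntegral.integral_nonneg (by linarith)
    intro θ _; exact g8_nonneg hε.ne' hs0 θ
  have hn3 : 0 ≤ ∫ θ in ε..Real.pi, g8 ε s β θ := by
    apply intervalIntegral.integral_nonneg (by linarith)
    intro θ _; exact g8_nonneg hε.ne' hs0 θ
  have hmain : (1/2:ℝ)^β/40 * ε ≤ ∫ θ in (ε/2)..ε, g8 ε s β θ := by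
    have hconst : ∫ θ in (ε/2)..ε, ((1/2:ℝ)^β * (1/20)) = (ε - ε/2) * ((1/2:ℝ)^β * (1/20)) := by
      rw [intervalIntegral.integral_const, smul_eq_mul]
    have hmono : ∫ θ in (ε/2)..ε, ((1/2:ℝ)^β * (1/20)) ≤ ∫ θ in (ε/2)..ε, g8 ε s β θ := by
      apply intervalIntegral.integral_mono_on (by linarith)
        intervalIntegrable_const (hInt _ _)
      intro θ hθ
      have hθ1 : ε/2 ≤ θ := hθ.1
      have hθ2 : θ ≤ ε := hθ.2
      have hθ0 : 0 < θ := by linarith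
      have hθπ : θ ≤ Real.pi := by linarith
      have hcub := one_sub_cos_ub θ
      have hclb := one_sub_cos_lb hθ0.le hθπ
      have hc0 : 0 ≤ 1 - Real.cos θ := sub_nonneg.2 (Real.cos_le_one θ)
      have hD := D_pos hε.ne' hs0 θ
      have hDub : ε^2 + 2*s*(1 - Real.cos θ) ≤ 2*ε^2 := by nlinarith
      unfold g8
      apply mul_le_mul
      · apply Real.rpow_le_rpow (by norm_num) _ hβ0
        rw [le_div_iff₀ hD]; nlinarith
      · rw [le_div_iff₀ hD]; nlinarith
      · norm_num
      · positivity
    calc (1/2:ℝ)^β/40 * ε = (ε - ε/2) * ((1/2:ℝ)^β * (1/20)) := by ring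
      _ = ∫ θ in (ε/2)..ε, ((1/2:ℝ)^β * (1/20)) := hconst.symm
      _ ≤ ∫ θ in (ε/2)..ε, g8 ε s β θ := hmono
  calc (1/2:ℝ)^β/40 * ε ≤ ∫ θ in (ε/2)..ε, g8 ε s β θ := hmain
    _ ≤ (∫ θ in (ε/2)..ε, g8 ε s β θ) + ∫ θ in ε..Real.pi, g8 ε s β θ := by linarith
    _ = ∫ θ in (ε/2)..Real.pi, g8 ε s β θ := h2
    _ ≤ (∫ θ in (-Real.pi)..(ε/2), g8 ε s β θ) + ∫ θ in (ε/2)..Real.pi, g8 ε s β θ := by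
        linarith
    _ = ∫ θ in (-Real.pi)..Real.pi, g8 ε s β θ := h1

end bounds

set_option maxHeartbeats 2000000

/-- two-sided bounds for the second-moment integral, for fixed `L > 1/2`,
uniformly in `r ∈ [r₀,1)` and `α ≥ 1`. -/
theorem statement8 (L : ℝ) (hL : 1/2 < L) :
    ∃ r₀ ∈ Set.Ioo (0 : ℝ) 1, ∃ CL > (0 : ℝ), ∃ C > (0 : ℝ), ∃ c : ℕ → ℝ,
      (∀ α : ℕ, 1 ≤ α → 0 < c α) ∧
      ∀ r ∈ Set.Ico r₀ (1 : ℝ), ∀ α : ℕ, 1 ≤ α →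
        c α * (1 - r) ≤
          (∫ θ in (-Real.pi)..Real.pi,
            ‖(1 - (r : ℂ) ^ 2) / (1 - (r : ℂ) ^ 2 * Complex.exp (θ * Complex.I))‖
                ^ (2 * (α : ℝ) * L) *
            ‖(1 - Complex.exp (θ * Complex.I)) /
                (1 - (r : ℂ) ^ 2 * Complex.exp (θ * Complex.I))‖ ^ 2) ∧
        (∫ θ in (-Real.pi)..Real.pi,
            ‖(1 - (r : ℂ) ^ 2) / (1 - (r : ℂ) ^ 2 * Complex.exp (θ * Complex.I))‖
                ^ (2 * (α : ℝ) * L) *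
            ‖(1 - Complex.exp (θ * Complex.I)) /
                (1 - (r : ℂ) ^ 2 * Complex.exp (θ * Complex.I))‖ ^ 2) ≤
          CL * (α : ℝ) ^ (-(3 / 2 : ℝ)) * (1 - r) + (C * (1 - r)) ^ (2 * (α : ℝ) * L) := by
  have hL0 : (0:ℝ) < L := by linarith
  have hLpos : (0:ℝ) < 2*L - 1 := by linarith
  have h5pos : (0:ℝ) < (5:ℝ)^(L+1) := Real.rpow_pos_of_pos (by norm_num) _
  set K : ℝ := 144 + 8/3 + 8*(5:ℝ)^(L+1)/(2*L-1) with hKdef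
  have hK : 0 < K := by
    have : 0 ≤ 8*(5:ℝ)^(L+1)/(2*L-1) := div_nonneg (by positivity) (by linarith)
    rw [hKdef]; linarith
  have hLrp : 0 < L^(-(3/2):ℝ) := Real.rpow_pos_of_pos hL0 _
  refine ⟨4/5, by norm_num, 4*K*L^(-(3/2):ℝ), by positivity, 1, by norm_num,
    fun α => (1/2:ℝ)^((α:ℝ)*L)/40, fun α _ => by positivity, ?_⟩
  intro r hr α hα
  obtain ⟨hr45, hr1⟩ := hr
  have hr0 : (0:ℝ) ≤ r := by linarith
  have hα1 : (1:ℝ) ≤ (α:ℝ) := by exact_mod_cast hα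
  set β : ℝ := (α:ℝ)*L with hβdef
  have hβL : L ≤ β := by nlinarith
  have hβ0 : (0:ℝ) ≤ β := by linarith
  have hε : 0 < 1 - r^2 := by nlinarith
  have hε' : 1 - r^2 ≤ 9/25 := by nlinarith
  have hs : (1/2:ℝ) ≤ r^2 := by nlinarith
  have hs1 : r^2 ≤ 1 := by nlinarith
  have h1r : 1 - r ≤ 1 - r^2 := by nlinarith
  have h1r0 : 0 < 1 - r := by linarith
  simp only [show (2 * (α:ℝ) * L) = 2*((α:ℝ)*L) from by ring]
  have hIeq : (∫ θ in (-Real.pi)..Real.pi,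
        ‖(1 - (r : ℂ) ^ 2) / (1 - (r : ℂ) ^ 2 * Complex.exp (θ * Complex.I))‖
            ^ (2 * ((α:ℝ) * L)) *
        ‖(1 - Complex.exp (θ * Complex.I)) /
            (1 - (r : ℂ) ^ 2 * Complex.exp (θ * Complex.I))‖ ^ 2)
      = ∫ θ in (-Real.pi)..Real.pi, g8 (1-r^2) (r^2) β θ := by
    apply intervalIntegral.integral_congr
    intro θ _
    exact integrand_eq r θ β hβ0 hr0 hr1
  rw [hIeq]
  constructor
  · have hlow := lower_full hL hβL hε hε' hs hs1
    have : (1/2:ℝ)^β/40 * (1-r) ≤ (1/2:ℝ)^β/40 * (1-r^2) := by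
      apply mul_le_mul_of_nonneg_left h1r (by positivity)
    linarith
  · have hup := upper_full hL hβL hε hε' hs hs1
    have hmulr : β^(-(3/2):ℝ) = (α:ℝ)^(-(3/2):ℝ) * L^(-(3/2):ℝ) := by
      rw [hβdef, Real.mul_rpow (by linarith) hL0.le]
    have hαrp : 0 < (α:ℝ)^(-(3/2):ℝ) := Real.rpow_pos_of_pos (by linarith) _
    have hstep : 2*K * ((1-r^2) * β^(-(3/2):ℝ))
        ≤ 4*K*L^(-(3/2):ℝ) * (α:ℝ)^(-(3/2):ℝ) * (1-r) := by
      have h1 : (1-r^2) * β^(-(3/2):ℝ) ≤ (2*(1-r)) * β^(-(3/2):ℝ) := by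
        apply mul_le_mul_of_nonneg_right (by nlinarith [sq_nonneg (1-r)]) (by positivity)
      have h2 : 2*K * ((1-r^2) * β^(-(3/2):ℝ)) ≤ 2*K * ((2*(1-r)) * β^(-(3/2):ℝ)) :=
        mul_le_mul_of_nonneg_left h1 (by linarith)
      have h3 : 2*K * ((2*(1-r)) * β^(-(3/2):ℝ))
          = 4*K*L^(-(3/2):ℝ) * (α:ℝ)^(-(3/2):ℝ) * (1-r) := by
        rw [hmulr]; ring
      linarith
    have hpos : 0 < ((1:ℝ)*(1-r))^(2*((α:ℝ)*L)) :=
      Real.rpow_pos_of_pos (by linarith) _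
    have : β = (α:ℝ)*L := hβdef
    calc ∫ θ in (-Real.pi)..Real.pi, g8 (1-r^2) (r^2) β θ
        ≤ 2*K * ((1-r^2) * β^(-(3/2):ℝ)) := hup
      _ ≤ 4*K*L^(-(3/2):ℝ) * (α:ℝ)^(-(3/2):ℝ) * (1-r) := hstep
      _ ≤ 4*K*L^(-(3/2):ℝ) * (α:ℝ)^(-(3/2):ℝ) * (1-r)
            + ((1:ℝ)*(1-r))^(2*((α:ℝ)*L)) := by linarith

end
end

section
/- Fix 0 < L < 1/2. Then lim_{x→1⁻} ∑_{m=0}^∞ a_{m,L}² x^m = Γ(1−2L)/Γ(1−L)², and moreover Γ(1−2L)/Γ(1−L)² = Γ(1/2−L)/(4^L·√π·Γ(1−L)). -/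
open Filter

noncomputable section

namespace Stmt11

open Real Set MeasureTheory

def A (L : ℝ) (m : ℕ) : ℝ := Real.Gamma (L + m) / (Real.Gamma L * m.factorial)

variable {L : ℝ}

lemma A_def (L : ℝ) (m : ℕ) : A L m = Real.Gamma (L + m) / (Real.Gamma L * m.factorial) := rfl

lemma A_pos (hL0 : 0 < L) (m : ℕ) : 0 < A L m := by
  apply div_pos (Real.Gamma_pos_of_pos (by positivity))
  exact mul_pos (Real.Gamma_pos_of_pos hL0) (by exact_mod_cast m.factorial_pos)

lemma A_zero (hL0 : 0 < L) : A L 0 = 1 := by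
  have h := (Real.Gamma_pos_of_pos hL0).ne'
  simp [A, div_self h]

lemma A_succ (hL0 : 0 < L) (m : ℕ) : A L (m + 1) = (L + m) / (m + 1) * A L m := by
  have h1 : L + (m + 1 : ℕ) = (L + m) + 1 := by push_cast; ring
  have h2 : Real.Gamma (L + m + 1) = (L + m) * Real.Gamma (L + m) :=
    Real.Gamma_add_one (by positivity)
  have h3 : ((m + 1 : ℕ).factorial : ℝ) = (m + 1) * m.factorial := by
    rw [Nat.factorial_succ]; push_cast; ring
  rw [A, A, h1, h2, h3]
  have hm : (0:ℝ) < m + 1 := by positivity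
  field_simp

lemma A_le (hL0 : 0 < L) (hL1 : L ≤ 1) (m : ℕ) : A L m ≤ ((m : ℝ) + 1) ^ (L - 1) := by
  induction m with
  | zero => simp [A_zero hL0]
  | succ m ih =>
    have hm1 : (0:ℝ) < (m:ℝ) + 1 := by positivity
    have hm2 : (0:ℝ) < (m:ℝ) + 2 := by positivity
    have key : (L + m) / (m + 1) ≤ (((m:ℝ) + 2) / ((m:ℝ) + 1)) ^ (L - 1) := by
      set b := (((m:ℝ) + 2) / ((m:ℝ) + 1)) ^ (1 - L) with hbdef
      have hb0 : 0 < b := Real.rpow_pos_of_pos (by positivity) _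
      have hb : b ≤ 1 + (1 - L) * (1 / ((m:ℝ)+1)) := by
        have hrw : ((m:ℝ) + 2) / ((m:ℝ) + 1) = 1 + 1 / ((m:ℝ)+1) := by field_simp; ring
        rw [hbdef, hrw]
        exact rpow_one_add_le_one_add_mul_self
          (le_trans (by norm_num) (by positivity : (0:ℝ) ≤ 1 / ((m:ℝ)+1))) (by linarith)
          (by linarith)
      have h5 : (1/((m:ℝ)+1)) * (L+m) ≤ 1 := by
        rw [div_mul_eq_mul_div, div_le_one hm1]; linarith
      have h6 : (1 + (1 - L) * (1 / ((m:ℝ)+1))) * (L + m) ≤ (m:ℝ)+1 := by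
        have := mul_le_mul_of_nonneg_left h5 (by linarith : (0:ℝ) ≤ 1-L)
        nlinarith
      have hbb : b * (L + m) ≤ (m:ℝ) + 1 :=
        le_trans (mul_le_mul_of_nonneg_right hb (by positivity)) h6
      have hrev : (((m:ℝ) + 2) / ((m:ℝ) + 1)) ^ (L - 1) = 1 / b := by
        rw [hbdef, one_div, ← Real.rpow_neg (by positivity)]
        congr 1; ring
      rw [hrev, div_le_div_iff₀ hm1 hb0, one_mul]
      nlinarith
    calc A L (m+1) = (L + m) / (m + 1) * A L m := A_succ hL0 m
      _ ≤ (((m:ℝ) + 2) / ((m:ℝ) + 1)) ^ (L - 1) * (((m:ℝ) + 1) ^ (L - 1)) := by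
          apply mul_le_mul key ih (A_pos hL0 m).le (by positivity)
      _ = ((m:ℝ) + 2) ^ (L - 1) := by
          rw [← Real.mul_rpow (by positivity) (by positivity)]
          congr 1; field_simp
      _ = (((m + 1 : ℕ) : ℝ) + 1) ^ (L - 1) := by push_cast; ring_nf

lemma A_le_one (hL0 : 0 < L) (hL1 : L ≤ 1) (m : ℕ) : A L m ≤ 1 :=
  (A_le hL0 hL1 m).trans (Real.rpow_le_one_of_one_le_of_nonpos
    (by linarith [Nat.cast_nonneg (α := ℝ) m]) (by linarith))

lemma summable_u {r : ℝ} (hr0 : 0 < r) (hr1 : r < 1) :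
    Summable (fun m : ℕ => (m : ℝ) * r ^ (m - 1)) := by
  rw [← summable_nat_add_iff 1]
  have h1 : Summable (fun m : ℕ => ((m:ℝ))^1 * r ^ m) :=
    summable_pow_mul_geometric_of_norm_lt_one 1
      (by rw [Real.norm_eq_abs, abs_of_pos hr0]; exact hr1)
  have h2 : Summable (fun m : ℕ => r ^ m) := summable_geometric_of_lt_one hr0.le hr1
  apply Summable.congr (h1.add h2)
  intro m
  simp only [Nat.add_sub_cancel, pow_one]
  push_cast
  ring

lemma summable_S (hL0 : 0 < L) (hL1 : L ≤ 1) {x : ℝ} (hx : |x| < 1) :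
    Summable (fun m : ℕ => A L m * x ^ m) := by
  apply Summable.of_norm_bounded (summable_geometric_of_lt_one (abs_nonneg x) hx)
  intro m
  rw [norm_mul, norm_pow, Real.norm_eq_abs, Real.norm_eq_abs,
    abs_of_pos (A_pos hL0 m)]
  calc A L m * |x| ^ m ≤ 1 * |x| ^ m := by
        apply mul_le_mul_of_nonneg_right (A_le_one hL0 hL1 m) (by positivity)
    _ = |x| ^ m := one_mul _

lemma der_bound (hL0 : 0 < L) (hL1 : L ≤ 1) {r : ℝ} {y : ℝ} (hy : |y| ≤ r) (m : ℕ) :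
    ‖A L m * ((m:ℝ) * y ^ (m - 1))‖ ≤ (m : ℝ) * r ^ (m - 1) := by
  have hr0 : 0 ≤ r := (abs_nonneg y).trans hy
  rw [norm_mul, norm_mul, norm_pow, Real.norm_eq_abs, Real.norm_eq_abs, Real.norm_eq_abs,
    abs_of_pos (A_pos hL0 m), abs_of_nonneg (Nat.cast_nonneg m)]
  calc A L m * ((m:ℝ) * |y| ^ (m-1)) ≤ 1 * ((m:ℝ) * r ^ (m-1)) := by
        apply mul_le_mul (A_le_one hL0 hL1 m) _ (by positivity) one_pos.le
        exact mul_le_mul_of_nonneg_left (pow_le_pow_left₀ (abs_nonneg y) hy _) (Nat.cast_nonneg m)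
    _ = _ := one_mul _

lemma summable_der (hL0 : 0 < L) (hL1 : L ≤ 1) {x : ℝ} (hx : |x| < 1) :
    Summable (fun m : ℕ => A L m * ((m:ℝ) * x ^ (m - 1))) := by
  apply Summable.of_norm_bounded (summable_u (r := (|x|+1)/2) (by positivity) (by linarith))
  exact fun m => der_bound hL0 hL1 (by linarith [abs_nonneg x]) m

def S (L : ℝ) (x : ℝ) : ℝ := ∑' m : ℕ, A L m * x ^ m

lemma hasDerivAt_S (hL0 : 0 < L) (hL1 : L ≤ 1) {x : ℝ} (hx : |x| < 1) :
    HasDerivAt (S L) (∑' m : ℕ, A L m * ((m:ℝ) * x ^ (m - 1))) x := by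
  set r := (|x| + 1) / 2 with hr
  have hr0 : 0 < r := by positivity
  have hr1 : r < 1 := by rw [hr]; linarith
  apply hasDerivAt_tsum_of_isPreconnected (summable_u hr0 hr1)
    (isOpen_Ioo (a := -r) (b := r)) (convex_Ioo _ _).isPreconnected
    (g := fun m z => A L m * z ^ m)
    (g' := fun m y => A L m * ((m:ℝ) * y ^ (m - 1))) (y₀ := 0)
  · intro n y _
    exact (hasDerivAt_pow n y).const_mul _
  · intro n y hy
    exact der_bound hL0 hL1 (by rw [abs_le]; exact ⟨(hy.1).le, hy.2.le⟩) n
  · exact ⟨by linarith, hr0⟩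
  · apply summable_of_ne_finset_zero (s := {0})
    intro m hm
    simp only [Finset.mem_singleton] at hm
    simp [zero_pow hm]
  · constructor <;> [linarith [neg_abs_le x]; linarith [le_abs_self x]]

lemma ode (hL0 : 0 < L) (hL1 : L ≤ 1) {x : ℝ} (hx : |x| < 1) :
    (1 - x) * (∑' m : ℕ, A L m * ((m:ℝ) * x ^ (m - 1))) = L * S L x := by
  have hT := summable_der hL0 hL1 hx
  have hS := summable_S hL0 hL1 hx
  set T := ∑' m : ℕ, A L m * ((m:ℝ) * x ^ (m - 1)) with hTdef
  have h1 : T = ∑' k : ℕ, (L + k) * A L k * x ^ k := by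
    rw [hTdef, hT.tsum_eq_zero_add]
    simp only [Nat.cast_zero, zero_mul, mul_zero, zero_add]
    apply tsum_congr
    intro k
    have hA : A L (k+1) * ((k:ℝ) + 1) = (L + k) * A L k := by
      rw [A_succ hL0 k]
      have : ((k:ℝ) + 1) ≠ 0 := by positivity
      field_simp
    have hk : (k + 1 : ℕ) - 1 = k := rfl
    rw [hk]
    push_cast
    linear_combination x ^ k * hA
  have h2 : x * T = ∑' m : ℕ, (m:ℝ) * A L m * x ^ m := by
    rw [hTdef, ← tsum_mul_left]
    apply tsum_congr
    intro m
    cases m with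
    | zero => simp
    | succ k =>
      simp only [Nat.add_sub_cancel]
      push_cast
      ring
  have hsum2 : Summable (fun m : ℕ => (m:ℝ) * A L m * x ^ m) := by
    apply (hT.mul_left x).congr
    intro m
    cases m with
    | zero => simp
    | succ k => simp only [Nat.add_sub_cancel]; push_cast; ring
  have hsum3 : Summable (fun m : ℕ => L * (A L m * x ^ m)) := hS.mul_left L
  have h3 : x * T + L * S L x = ∑' m : ℕ, ((m:ℝ) * A L m * x ^ m + L * (A L m * x ^ m)) := by
    rw [h2, S, ← tsum_mul_left, hsum2.tsum_add hsum3]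
  have h4 : (∑' m : ℕ, ((m:ℝ) * A L m * x ^ m + L * (A L m * x ^ m))) = T := by
    rw [h1]
    apply tsum_congr
    intro k
    ring
  linarith [h3, h4]

lemma S_zero (hL0 : 0 < L) : S L 0 = 1 := by
  rw [S, tsum_eq_single 0 (fun b hb => by simp [zero_pow hb])]
  simp [A_zero hL0]

lemma S_eq (hL0 : 0 < L) (hL1 : L ≤ 1) {t : ℝ} (ht0 : 0 ≤ t) (ht1 : t < 1) :
    S L t = (1 - t) ^ (-L) := by
  set g : ℝ → ℝ := fun x => (1 - x) ^ L * S L x with hg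
  have hder : ∀ x ∈ Icc (0:ℝ) t, HasDerivAt g 0 x := by
    intro x hx
    have hx1 : |x| < 1 := by
      rw [abs_lt]; exact ⟨by linarith [hx.1], by linarith [hx.2]⟩
    have h1x : (0:ℝ) < 1 - x := by
      have := le_abs_self x; linarith [abs_lt.mp hx1]
    have hS' := hasDerivAt_S hL0 hL1 hx1
    have hb : HasDerivAt (fun x : ℝ => 1 - x) (-1) x := by
      simpa using (hasDerivAt_id x).const_sub 1
    have hpow := hb.rpow_const (p := L) (Or.inl h1x.ne')
    have := hpow.mul hS'
    refine this.congr_deriv ?_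
    have hrw : (1 - x) ^ L = (1 - x) ^ (L - 1) * (1 - x) := by
      nth_rewrite 3 [← Real.rpow_one (1 - x)]
      rw [← Real.rpow_add h1x]
      norm_num
    rw [hrw]
    have hode := ode hL0 hL1 hx1
    linear_combination ((1 - x) ^ (L - 1)) * hode
  have hcont : ContinuousOn g (Icc 0 t) :=
    fun x hx => ((hder x hx).continuousAt).continuousWithinAt
  have hconst := constant_of_has_deriv_right_zero hcont
    (fun x hx => ((hder x (Ico_subset_Icc_self hx)).hasDerivWithinAt))
  have h := hconst t (right_mem_Icc.mpr ht0)
  have hg0 : g 0 = 1 := by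
    simp [hg, S_zero hL0, Real.one_rpow]
  rw [hg0] at h
  have h1t : (0:ℝ) < 1 - t := by linarith
  have hLpow : (0:ℝ) < (1 - t) ^ L := Real.rpow_pos_of_pos h1t L
  have h' : (1 - t) ^ L * S L t = 1 := h
  have hne := hLpow.ne'
  have hfin : S L t = ((1 - t) ^ L)⁻¹ := by
    field_simp
    linear_combination h'
  rw [hfin, Real.rpow_neg h1t.le]

lemma beta_cast {s t : ℝ} {x : ℝ} (hx0 : 0 ≤ x) (hx1 : x ≤ 1) :
    ((x ^ (s-1) * (1-x) ^ (t-1) : ℝ) : ℂ)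
      = (x:ℂ) ^ ((s:ℂ) - 1) * (1 - (x:ℂ)) ^ ((t:ℂ) - 1) := by
  rw [Complex.ofReal_mul, Complex.ofReal_cpow hx0, Complex.ofReal_cpow (by linarith)]
  push_cast
  ring_nf

lemma realBeta_integrable {s t : ℝ} (hs : 0 < s) (ht : 0 < t) :
    IntegrableOn (fun x : ℝ => x ^ (s-1) * (1-x) ^ (t-1)) (Ioc (0:ℝ) 1) volume := by
  have hconv := Complex.betaIntegral_convergent (u := (s:ℂ)) (v := (t:ℂ))
    (by simpa using hs) (by simpa using ht)
  rw [intervalIntegrable_iff_integrableOn_Ioc_of_le zero_le_one] at hconv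
  have hre := hconv.re
  apply hre.congr
  rw [Filter.EventuallyEq, ae_restrict_iff' measurableSet_Ioc]
  apply Eventually.of_forall
  intro x hx
  rw [← beta_cast hx.1.le hx.2]
  simp

lemma realBeta_value {s t : ℝ} (hs : 0 < s) (ht : 0 < t) :
    ∫ x in Ioc (0:ℝ) 1, x ^ (s-1) * (1-x) ^ (t-1)
      = Real.Gamma s * Real.Gamma t / Real.Gamma (s+t) := by
  have hgam := Complex.Gamma_mul_Gamma_eq_betaIntegral (s := (s:ℂ)) (t := (t:ℂ))
    (by simpa using hs) (by simpa using ht)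
  have hbeta : Complex.betaIntegral (s:ℂ) (t:ℂ)
      = ((∫ x in (0:ℝ)..1, x ^ (s-1) * (1-x) ^ (t-1) : ℝ) : ℂ) := by
    rw [Complex.betaIntegral, ← intervalIntegral.integral_ofReal]
    apply intervalIntegral.integral_congr
    intro x hx
    rw [uIcc_of_le zero_le_one] at hx
    exact (beta_cast hx.1 hx.2).symm
  rw [hbeta, ← Complex.ofReal_add, Complex.Gamma_ofReal, Complex.Gamma_ofReal,
    Complex.Gamma_ofReal, ← Complex.ofReal_mul, ← Complex.ofReal_mul] at hgam
  have hreal : Real.Gamma s * Real.Gamma t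
      = Real.Gamma (s+t) * ∫ x in (0:ℝ)..1, x ^ (s-1) * (1-x) ^ (t-1) := by
    exact_mod_cast hgam
  have hne : Real.Gamma (s+t) ≠ 0 := (Real.Gamma_pos_of_pos (by linarith)).ne'
  rw [← intervalIntegral.integral_of_le zero_le_one]
  field_simp
  linarith [hreal]

lemma summable_sq (hL0 : 0 < L) (hL : L < 1/2) : Summable (fun m : ℕ => A L m ^ 2) := by
  have hmaj : Summable (fun m : ℕ => ((m:ℝ)+1) ^ (2*L-2)) := by
    have h := (Real.summable_nat_rpow (p := 2*L-2)).mpr (by linarith)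
    have h2 := (summable_nat_add_iff 1).mpr h
    apply h2.congr
    intro m
    push_cast
    norm_num
  apply Summable.of_nonneg_of_le (fun m => sq_nonneg _) _ hmaj
  intro m
  have h1 := A_le hL0 (by linarith) m
  have h2 : A L m ^ 2 ≤ (((m:ℝ)+1) ^ (L-1)) ^ 2 :=
    pow_le_pow_left₀ (A_pos hL0 m).le h1 2
  refine h2.trans_eq ?_
  rw [← Real.rpow_natCast (((m:ℝ)+1) ^ (L-1)) 2, ← Real.rpow_mul (by positivity)]
  norm_num
  ring_nf

lemma hasSum_sq (hL0 : 0 < L) (hL : L < 1/2) :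
    HasSum (fun m : ℕ => A L m ^ 2)
      (Real.Gamma (1 - 2*L) / Real.Gamma (1 - L) ^ 2) := by
  have hL1 : L ≤ 1 := by linarith
  have h1L : 0 < 1 - L := by linarith
  have h12L : 0 < 1 - 2*L := by linarith
  set F : ℕ → ℝ → ℝ := fun m x => A L m * (x ^ ((L + m) - 1) * (1-x) ^ ((1 - L) - 1))
    with hFdef
  have hFint : ∀ m : ℕ, Integrable (F m) (volume.restrict (Ioc (0:ℝ) 1)) := by
    intro m
    exact (realBeta_integrable (by positivity : (0:ℝ) < L + m) h1L).const_mul (A L m)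
  have hGamL := Real.Gamma_pos_of_pos hL0
  have hGam1L := Real.Gamma_pos_of_pos h1L
  have hFval : ∀ m : ℕ, ∫ x in Ioc (0:ℝ) 1, F m x
      = (Real.Gamma L * Real.Gamma (1-L)) * A L m ^ 2 := by
    intro m
    rw [hFdef]
    simp only
    rw [integral_const_mul, realBeta_value (by positivity : (0:ℝ) < L + m) h1L]
    have hfac : Real.Gamma ((L + m) + (1 - L)) = (m.factorial : ℝ) := by
      have : (L + m) + (1 - L) = (m:ℝ) + 1 := by ring
      rw [this]
      exact_mod_cast Real.Gamma_nat_eq_factorial m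
    rw [hfac, A_def]
    have hfm : (0:ℝ) < (m.factorial : ℝ) := by exact_mod_cast m.factorial_pos
    field_simp
  have hFnn : ∀ m : ℕ, ∀ x ∈ Ioc (0:ℝ) 1, 0 ≤ F m x := by
    intro m x hx
    have := (A_pos hL0 m).le
    have h1 : (0:ℝ) ≤ x ^ ((L + m) - 1) := Real.rpow_nonneg hx.1.le _
    have h2 : (0:ℝ) ≤ (1-x) ^ ((1 - L) - 1) := Real.rpow_nonneg (by linarith [hx.2]) _
    positivity
  have hFsum : Summable (fun m : ℕ => ∫ x in Ioc (0:ℝ) 1, ‖F m x‖) := by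
    have heq : ∀ m : ℕ, (∫ x in Ioc (0:ℝ) 1, ‖F m x‖)
        = (Real.Gamma L * Real.Gamma (1-L)) * A L m ^ 2 := by
      intro m
      rw [← hFval m]
      apply setIntegral_congr_fun measurableSet_Ioc
      intro x hx
      exact Real.norm_of_nonneg (hFnn m x hx)
    rw [funext heq]
    exact (summable_sq hL0 hL).mul_left _
  have hex := MeasureTheory.hasSum_integral_of_summable_integral_norm hFint hFsum
  have hswap : ∫ x in Ioc (0:ℝ) 1, (∑' m : ℕ, F m x)
      = ∫ x in Ioc (0:ℝ) 1, x ^ (L - 1) * (1-x) ^ ((1 - 2*L) - 1) := by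
    apply setIntegral_congr_fun measurableSet_Ioc
    intro x hx
    show (∑' m : ℕ, F m x) = x ^ (L - 1) * (1-x) ^ ((1 - 2*L) - 1)
    by_cases hx1 : x = 1
    · subst hx1
      have hz : ∀ m : ℕ, F m 1 = 0 := by
        intro m
        rw [hFdef]
        simp only [sub_self]
        rw [Real.zero_rpow (by linarith : (1:ℝ) - L - 1 ≠ 0)]
        ring
      rw [tsum_congr hz, tsum_zero, show (1:ℝ) - 1 = 0 by ring,
        Real.zero_rpow (by intro h; linarith [h] : (1:ℝ) - 2*L - 1 ≠ 0)]
      ring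
    · have hx0 : 0 < x := hx.1
      have hxlt : x < 1 := lt_of_le_of_ne hx.2 hx1
      have h1x : 0 < 1 - x := by linarith
      have hterm : ∀ m : ℕ, F m x
          = (A L m * x ^ m) * (x ^ (L - 1) * (1-x) ^ (-L)) := by
        intro m
        rw [hFdef]
        simp only
        have hxp : x ^ ((L + m) - 1) = x ^ (m : ℕ) * x ^ (L - 1) := by
          rw [← Real.rpow_natCast x m, ← Real.rpow_add hx0]
          congr 1; ring
        have h1xp : (1:ℝ) - L - 1 = -L := by ring
        rw [hxp, h1xp]
        ring
      rw [tsum_congr hterm, tsum_mul_right]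
      have hSx : (∑' m : ℕ, A L m * x ^ m) = (1 - x) ^ (-L) :=
        S_eq hL0 hL1 hx0.le hxlt
      rw [hSx, show (1:ℝ) - 2*L - 1 = -L + -L by ring, Real.rpow_add h1x]
      ring
  rw [funext hFval, hswap, realBeta_value hL0 h12L] at hex
  have hc : (0:ℝ) < Real.Gamma L * Real.Gamma (1-L) := by positivity
  rw [show L + (1 - 2*L) = 1 - L by ring] at hex
  have hex2 := hex.mul_left (Real.Gamma L * Real.Gamma (1-L))⁻¹
  have hfun : (fun m : ℕ => (Real.Gamma L * Real.Gamma (1-L))⁻¹ *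
      ((Real.Gamma L * Real.Gamma (1-L)) * A L m ^ 2)) = fun m : ℕ => A L m ^ 2 := by
    funext m
    field_simp
  rw [hfun] at hex2
  have hv : (Real.Gamma L * Real.Gamma (1-L))⁻¹ * (Real.Gamma L * Real.Gamma (1 - 2*L) / Real.Gamma (1 - L))
      = Real.Gamma (1 - 2*L) / Real.Gamma (1 - L) ^ 2 := by
    field_simp
  rw [hv] at hex2
  exact hex2

lemma dup (hL0 : 0 < L) (hL : L < 1/2) :
    Real.Gamma (1 - 2 * L) / Real.Gamma (1 - L) ^ 2 =
      Real.Gamma (1/2 - L) / ((4 : ℝ) ^ L * Real.sqrt Real.pi * Real.Gamma (1 - L)) := by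
  have hdup := Real.Gamma_mul_Gamma_add_half (1/2 - L)
  rw [show (1:ℝ)/2 - L + 1/2 = 1 - L by ring, show 2*((1:ℝ)/2 - L) = 1 - 2*L by ring,
    show 1 - (1 - 2*L) = 2*L by ring] at hdup
  have h4 : (4:ℝ) ^ L = (2:ℝ) ^ (2*L) := by
    rw [Real.rpow_mul (by norm_num : (0:ℝ) ≤ 2)]
    norm_num
  have hpow : (0:ℝ) < (2:ℝ) ^ (2*L) := Real.rpow_pos_of_pos (by norm_num) _
  have hsqrt : (0:ℝ) < Real.sqrt Real.pi := Real.sqrt_pos.mpr Real.pi_pos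
  have hG1L : (0:ℝ) < Real.Gamma (1 - L) := Real.Gamma_pos_of_pos (by linarith)
  have hG12L : (0:ℝ) < Real.Gamma (1 - 2*L) := Real.Gamma_pos_of_pos (by linarith)
  rw [h4]
  set G1 := Real.Gamma (1/2 - L) with hG1
  set G2 := Real.Gamma (1 - L) with hG2
  set G3 := Real.Gamma (1 - 2*L) with hG3
  set P := (2:ℝ) ^ (2*L) with hP
  set Q := Real.sqrt Real.pi with hQ
  field_simp
  linear_combination (-1) * hdup

end Stmt11

/-- for fixed `0 < L < 1/2`,
`lim_{x→1⁻} ∑_m a_{m,L}² x^m = Γ(1−2L)/Γ(1−L)²`, and moreover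
`Γ(1−2L)/Γ(1−L)² = Γ(1/2−L)/(4^L √π Γ(1−L))`. -/
theorem statement11 (L : ℝ) (hL0 : 0 < L) (hL : L < 1/2)
    (a : ℕ → ℝ) (ha : ∀ m, a m = Real.Gamma (L + m) / (Real.Gamma L * m.factorial)) :
    Tendsto (fun x : ℝ => ∑' m : ℕ, a m ^ 2 * x ^ m)
      (nhdsWithin 1 (Set.Iio 1))
      (nhds (Real.Gamma (1 - 2 * L) / Real.Gamma (1 - L) ^ 2)) ∧
    Real.Gamma (1 - 2 * L) / Real.Gamma (1 - L) ^ 2 =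
      Real.Gamma (1/2 - L) / ((4 : ℝ) ^ L * Real.sqrt Real.pi * Real.Gamma (1 - L)) := by
  have hA : a = Stmt11.A L := funext fun m => ha m
  constructor
  · have hs := Stmt11.hasSum_sq hL0 hL
    have ht := Real.tendsto_tsum_powerSeries_nhdsWithin_lt hs.tendsto_sum_nat
    rw [hA]
    convert ht using 3
  · exact Stmt11.dup hL0 hL
end
end

section
/- Let L = 1/2, so a_{m,1/2} = Γ(1/2+m)/(Γ(1/2)·m!). Then ∑_{m=0}^∞ a_{m,1/2}² x^m = (1/π)·log(1/(1−x)) + O(1) as x → 1⁻; that is, there exists a constant C such that |∑_{m=0}^∞ a_{m,1/2}² x^m − (1/π)·log(1/(1−x))| ≤ C for all x ∈ (0,1). -/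
noncomputable section

open Real Filter

namespace Stmt13

/-- closed form of the coefficient -/
def A (m : ℕ) : ℝ := (2 * m).factorial / (4 ^ m * (m.factorial : ℝ) ^ 2)

lemma A_pos (m : ℕ) : 0 < A m := by
  unfold A; positivity

lemma A_step (m : ℕ) : A (m + 1) = A m * (2 * m + 1) / (2 * m + 2) := by
  unfold A
  have h1 : 2 * (m + 1) = (2 * m + 1) + 1 := by ring
  rw [h1, Nat.factorial_succ, Nat.factorial_succ, Nat.factorial_succ]
  have h2 : (m.factorial : ℝ) ≠ 0 := Nat.cast_ne_zero.mpr m.factorial_ne_zero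
  have h3 : ((2*m).factorial : ℝ) ≠ 0 := Nat.cast_ne_zero.mpr (2*m).factorial_ne_zero
  have h4 : (4 : ℝ) ^ m ≠ 0 := by positivity
  push_cast
  field_simp
  ring

lemma gamma_eq (m : ℕ) :
    Real.Gamma (1/2 + m) = Real.Gamma (1/2) * (2 * m).factorial / (4 ^ m * m.factorial) := by
  induction m with
  | zero => simp
  | succ m ih =>
    have hne : (1/2 : ℝ) + m ≠ 0 := by positivity
    have h : (1/2 : ℝ) + (m + 1 : ℕ) = (1/2 + m) + 1 := by push_cast; ring
    rw [h, Real.Gamma_add_one hne, ih]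
    have h1 : 2 * (m + 1) = (2 * m + 1) + 1 := by ring
    rw [h1, Nat.factorial_succ, Nat.factorial_succ, Nat.factorial_succ]
    have h2 : (m.factorial : ℝ) ≠ 0 := Nat.cast_ne_zero.mpr m.factorial_ne_zero
    have h3 : ((2*m).factorial : ℝ) ≠ 0 := Nat.cast_ne_zero.mpr (2*m).factorial_ne_zero
    have h4 : (4 : ℝ) ^ m ≠ 0 := by positivity
    push_cast
    field_simp
    ring

lemma a_eq_A (a : ℕ → ℝ)
    (ha : ∀ m, a m = Real.Gamma (1/2 + m) / (Real.Gamma (1/2) * m.factorial)) (m : ℕ) :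
    a m = A m := by
  have hg : Real.Gamma (1/2) ≠ 0 := by
    rw [Real.Gamma_one_half_eq]; positivity
  have h2 : (m.factorial : ℝ) ≠ 0 := Nat.cast_ne_zero.mpr m.factorial_ne_zero
  rw [ha m, gamma_eq m, A]
  have h4 : (4 : ℝ) ^ m ≠ 0 := by positivity
  field_simp

/-- square of the Stirling sequence -/
def s (n : ℕ) : ℝ := (Stirling.stirlingSeq n) ^ 2

lemma s_eq (n : ℕ) : s n = (n.factorial : ℝ) ^ 2 / (2 * n * ((n : ℝ) / Real.exp 1) ^ (2 * n)) := by
  unfold s Stirling.stirlingSeq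
  rw [div_pow, mul_pow, sq_sqrt (by positivity : (0:ℝ) ≤ 2 * n), ← pow_mul, mul_comm n 2]

lemma key (m : ℕ) (hm : 1 ≤ m) : (m : ℝ) * (A m) ^ 2 = s (2 * m) / (s m) ^ 2 := by
  rw [s_eq, s_eq, A]
  have hm0 : (0:ℝ) < m := by exact_mod_cast hm
  have he : (0:ℝ) < Real.exp 1 := Real.exp_pos 1
  have h2 : ((2 * m : ℕ) : ℝ) / Real.exp 1 = 2 * ((m : ℝ) / Real.exp 1) := by
    push_cast; ring
  rw [h2, mul_pow]
  have hq : (0:ℝ) < (m : ℝ) / Real.exp 1 := by positivity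
  have hqp : ((m : ℝ) / Real.exp 1) ^ (2 * (2 * m)) ≠ 0 := by positivity
  have hqp2 : ((m : ℝ) / Real.exp 1) ^ (2 * m) ≠ 0 := by positivity
  have hf : (m.factorial : ℝ) ≠ 0 := Nat.cast_ne_zero.mpr m.factorial_ne_zero
  have h4 : (4 : ℝ) ^ m ≠ 0 := by positivity
  have h2p : (2 : ℝ) ^ (2 * (2 * m)) ≠ 0 := by positivity
  have hpow : (2 : ℝ) ^ (2 * (2 * m)) = ((4:ℝ) ^ m) ^ 2 := by
    rw [show (4:ℝ) = 2^2 by norm_num, ← pow_mul, ← pow_mul]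
    ring_nf
  have hexp : ((m : ℝ) / Real.exp 1) ^ (2 * (2 * m)) = (((m : ℝ) / Real.exp 1) ^ (2 * m)) ^ 2 := by
    rw [← pow_mul]; ring_nf
  push_cast
  rw [hpow, hexp]
  field_simp

lemma s_tendsto : Tendsto s atTop (nhds π) := by
  have := Stirling.tendsto_stirlingSeq_sqrt_pi.pow 2
  exact (by simpa [Real.sq_sqrt pi_nonneg] using this : Tendsto (fun n => Stirling.stirlingSeq n ^ 2) atTop (nhds π))

lemma b_tendsto : Tendsto (fun m : ℕ => (m : ℝ) * (A m) ^ 2) atTop (nhds (1 / π)) := by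
  have h2m : Tendsto (fun m : ℕ => 2 * m) atTop atTop :=
    tendsto_atTop_mono (fun n => Nat.le_mul_of_pos_left n two_pos) tendsto_id
  have hs2 : Tendsto (fun m : ℕ => s (2 * m)) atTop (nhds π) := s_tendsto.comp h2m
  have hs : Tendsto (fun m : ℕ => (s m) ^ 2) atTop (nhds (π ^ 2)) := s_tendsto.pow 2
  have hpi : (π : ℝ) ^ 2 ≠ 0 := by positivity
  have hratio : Tendsto (fun m : ℕ => s (2 * m) / (s m) ^ 2) atTop (nhds (π / π ^ 2)) :=
    hs2.div hs hpi
  have hval : π / π ^ 2 = 1 / π := by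
    field_simp
  rw [hval] at hratio
  refine hratio.congr' ?_
  filter_upwards [eventually_ge_atTop 1] with m hm
  exact (key m hm).symm

lemma b_mono : Monotone (fun m : ℕ => (m : ℝ) * (A m) ^ 2) := by
  apply monotone_nat_of_le_succ
  intro m
  have h := A_step m
  have hA := A_pos m
  have hd : (0:ℝ) < 2 * m + 2 := by positivity
  rw [h]
  rw [div_pow, ← mul_div_assoc]
  rw [le_div_iff₀ (by positivity)]
  push_cast
  nlinarith [sq_nonneg (A m), Nat.cast_nonneg (α := ℝ) m]

lemma d_anti : Antitone (fun m : ℕ => ((m : ℝ) + 1/2) * (A m) ^ 2) := by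
  apply antitone_nat_of_succ_le
  intro m
  have h := A_step m
  have hA := A_pos m
  rw [h, div_pow, ← mul_div_assoc, div_le_iff₀ (by positivity)]
  push_cast
  nlinarith [sq_nonneg (A m), Nat.cast_nonneg (α := ℝ) m]

lemma Asq_tendsto : Tendsto (fun m : ℕ => (A m) ^ 2) atTop (nhds 0) := by
  have h : Tendsto (fun m : ℕ => ((m : ℝ) * (A m) ^ 2) * (1 / m)) atTop (nhds ((1/π) * 0)) :=
    b_tendsto.mul tendsto_one_div_atTop_nhds_zero_nat
  rw [mul_zero] at h
  refine h.congr' ?_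
  filter_upwards [eventually_ge_atTop 1] with m hm
  have hm0 : (m : ℝ) ≠ 0 := by positivity
  field_simp

lemma d_tendsto : Tendsto (fun m : ℕ => ((m : ℝ) + 1/2) * (A m) ^ 2) atTop (nhds (1 / π)) := by
  have h := b_tendsto.add (Asq_tendsto.const_mul (1/2 : ℝ))
  rw [mul_zero, add_zero] at h
  refine h.congr ?_
  intro m; ring

lemma b_le (m : ℕ) : (m : ℝ) * (A m) ^ 2 ≤ 1 / π :=
  b_mono.ge_of_tendsto b_tendsto m

lemma d_ge (m : ℕ) : 1 / π ≤ ((m : ℝ) + 1/2) * (A m) ^ 2 :=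
  d_anti.le_of_tendsto d_tendsto m

lemma A_le_one (m : ℕ) : A m ≤ 1 := by
  induction m with
  | zero => unfold A; norm_num
  | succ m ih =>
    have h := A_step m
    have hA := A_pos m
    rw [h, div_le_one (by positivity)]
    nlinarith [Nat.cast_nonneg (α := ℝ) m]

lemma A_sq_le_one (m : ℕ) : A m ^ 2 ≤ 1 := by
  have h1 := A_pos m
  have h2 := A_le_one m
  nlinarith

lemma c_nonneg (m : ℕ) (hm : 1 ≤ m) : 0 ≤ 1 / (π * m) - A m ^ 2 := by
  have hb := b_le m
  have hm0 : (0:ℝ) < m := by exact_mod_cast hm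
  have hπ : (0:ℝ) < π := pi_pos
  rw [sub_nonneg, le_div_iff₀ (by positivity)]
  have h1 : π * (1/π) = 1 := by field_simp
  nlinarith [mul_le_mul_of_nonneg_left hb pi_pos.le]

lemma c_le (m : ℕ) (hm : 1 ≤ m) : 1 / (π * m) - A m ^ 2 ≤ 1 / (m : ℝ) ^ 2 := by
  have hd := d_ge m
  have hm0 : (0:ℝ) < m := by exact_mod_cast hm
  have hm1 : (1:ℝ) ≤ m := by exact_mod_cast hm
  have hπ : (3:ℝ) < π := pi_gt_three
  have hA2 : (1/π) / ((m:ℝ) + 1/2) ≤ A m ^ 2 := by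
    rw [div_le_iff₀ (by positivity)]
    linarith [hd]
  have hrw : (1/π) / ((m:ℝ) + 1/2) = 1 / (π * ((m:ℝ) + 1/2)) := by
    rw [div_div]
  have hkey : 1 / (π * (m:ℝ)) - 1 / (π * ((m:ℝ) + 1/2)) ≤ 1 / (m:ℝ)^2 := by
    rw [div_sub_div _ _ (by positivity) (by positivity),
      div_le_div_iff₀ (by positivity) (by positivity)]
    nlinarith [mul_pos pi_pos (mul_pos hm0 hm0), mul_pos pi_pos hm0, sq_nonneg ((m:ℝ))]
  rw [hrw] at hA2
  linarith

lemma Ksummable : Summable (fun n : ℕ => 1 / ((n:ℝ) + 1) ^ 2) := by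
  have h : Summable (fun n : ℕ => 1 / (n:ℝ) ^ 2) :=
    summable_one_div_nat_pow.mpr one_lt_two
  have := (summable_nat_add_iff 1).mpr h
  refine this.congr fun n => ?_
  push_cast
  ring

end Stmt13

set_option maxHeartbeats 1000000 in
open Stmt13 in
/-- for `L = 1/2`, `∑_m a_{m,1/2}² x^m = (1/π) log(1/(1−x)) + O(1)` as
`x → 1⁻`: the difference is bounded uniformly on `(0,1)`. -/
theorem statement13
    (a : ℕ → ℝ)
    (ha : ∀ m, a m = Real.Gamma (1/2 + m) / (Real.Gamma (1/2) * m.factorial)) :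
    ∃ C : ℝ, ∀ x ∈ Set.Ioo (0 : ℝ) 1,
      |(∑' m : ℕ, a m ^ 2 * x ^ m) - (1 / Real.pi) * Real.log (1 / (1 - x))| ≤ C := by
  have haA := Stmt13.a_eq_A a ha
  set K := ∑' n : ℕ, 1 / ((n:ℝ) + 1) ^ 2 with hKdef
  have hK0 : 0 ≤ K := tsum_nonneg fun n => by positivity
  refine ⟨1 + K, ?_⟩
  rintro x ⟨hx0, hx1⟩
  have hxabs : |x| < 1 := by rw [abs_of_pos hx0]; exact hx1
  have hlog := hasSum_pow_div_log_of_abs_lt_one hxabs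
  have hgeom : Summable fun n : ℕ => x ^ n := summable_geometric_of_lt_one hx0.le hx1
  have hsumA : Summable (fun n : ℕ => a n ^ 2 * x ^ n) := by
    refine hgeom.of_nonneg_of_le (fun n => by positivity) fun n => ?_
    have h1 : a n ^ 2 ≤ 1 := by rw [haA n]; exact A_sq_le_one n
    exact mul_le_of_le_one_left (pow_nonneg hx0.le n) h1
  have hlog2 : HasSum (fun n : ℕ => (1/π) * (x ^ (n+1) / ((n:ℝ)+1)))
      ((1/π) * Real.log (1 / (1 - x))) := by
    rw [one_div (1-x), Real.log_inv]
    have := hlog.mul_left (1/π)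
    simpa [mul_comm] using this
  have hsumA' : Summable (fun n : ℕ => a (n+1) ^ 2 * x ^ (n+1)) :=
    (summable_nat_add_iff 1).mpr hsumA
  have hA0 : a 0 ^ 2 * x ^ 0 = 1 := by
    rw [haA 0]; unfold Stmt13.A; norm_num
  have hS : (∑' n : ℕ, a n ^ 2 * x ^ n) = 1 + ∑' n : ℕ, a (n+1) ^ 2 * x ^ (n+1) := by
    rw [Summable.tsum_eq_zero_add hsumA, hA0]
  have hcnonneg : ∀ n : ℕ, 0 ≤ (1/π) * (x ^ (n+1) / ((n:ℝ)+1)) - a (n+1) ^ 2 * x ^ (n+1) := by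
    intro n
    have hc := c_nonneg (n+1) (Nat.le_add_left 1 n)
    have hx : 0 ≤ x ^ (n+1) := by positivity
    have heq : (1/π) * (x ^ (n+1) / ((n:ℝ)+1)) - a (n+1) ^ 2 * x ^ (n+1)
        = x ^ (n+1) * (1 / (π * ((n:ℝ)+1)) - A (n+1) ^ 2) := by
      rw [haA]
      have hπ : (0:ℝ) < π := pi_pos
      have hn : (0:ℝ) < (n:ℝ)+1 := by positivity
      push_cast
      field_simp
    rw [heq]
    push_cast at hc
    exact mul_nonneg hx (by linarith)
  have hcle : ∀ n : ℕ, (1/π) * (x ^ (n+1) / ((n:ℝ)+1)) - a (n+1) ^ 2 * x ^ (n+1)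
      ≤ 1 / ((n:ℝ)+1) ^ 2 := by
    intro n
    have hc := c_le (n+1) (Nat.le_add_left 1 n)
    have hc0 := c_nonneg (n+1) (Nat.le_add_left 1 n)
    push_cast at hc hc0
    have hx : 0 ≤ x ^ (n+1) := by positivity
    have hx1' : x ^ (n+1) ≤ 1 := pow_le_one₀ hx0.le hx1.le
    have heq : (1/π) * (x ^ (n+1) / ((n:ℝ)+1)) - a (n+1) ^ 2 * x ^ (n+1)
        = x ^ (n+1) * (1 / (π * ((n:ℝ)+1)) - A (n+1) ^ 2) := by
      rw [haA]
      have hπ : (0:ℝ) < π := pi_pos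
      have hn : (0:ℝ) < (n:ℝ)+1 := by positivity
      push_cast
      field_simp
    rw [heq]
    calc x ^ (n+1) * (1 / (π * ((n:ℝ)+1)) - A (n+1) ^ 2)
        ≤ 1 * (1 / ((n:ℝ)+1) ^ 2) := by
          apply mul_le_mul hx1' hc (by linarith) (by norm_num)
      _ = 1 / ((n:ℝ)+1) ^ 2 := by ring
  have hsumC : Summable (fun n : ℕ =>
      (1/π) * (x ^ (n+1) / ((n:ℝ)+1)) - a (n+1) ^ 2 * x ^ (n+1)) :=
    Ksummable.of_nonneg_of_le hcnonneg hcle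
  set U := ∑' n : ℕ, ((1/π) * (x ^ (n+1) / ((n:ℝ)+1)) - a (n+1) ^ 2 * x ^ (n+1)) with hUdef
  have hU0 : 0 ≤ U := tsum_nonneg hcnonneg
  have hUK : U ≤ K := Summable.tsum_le_tsum hcle hsumC Ksummable
  have hUeq : U = (∑' n : ℕ, (1/π) * (x ^ (n+1) / ((n:ℝ)+1)))
      - ∑' n : ℕ, a (n+1) ^ 2 * x ^ (n+1) :=
    Summable.tsum_sub hlog2.summable hsumA'
  have hdiff : (∑' m : ℕ, a m ^ 2 * x ^ m) - (1 / Real.pi) * Real.log (1 / (1 - x)) = 1 - U := by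
    rw [hS, ← hlog2.tsum_eq, hUeq]; ring
  rw [hdiff, abs_le]
  constructor <;> linarith
end
end

section
/- Fix 0 < L < 1/2, set ρ = 1/(1−L) ∈ (1,2), and fix x ≤ 0. Then there exist a constant c > 0 depending only on ρ and a threshold Y₀ > 0 such that for all real y with |y| ≥ max(2|x|, Y₀): log|Ψ_L(x + iy)| ≥ c·|y|^ρ. -/
open Filter Complex Topology

noncomputable section

/-- `b_{m,L} = Γ(L)·m!/Γ(L+m)`. -/
def bmL (L : ℝ) (m : ℕ) : ℝ := Real.Gamma L * m.factorial / Real.Gamma (L + m)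

/-- The canonical product `Ψ_L(z) = ∏_m (1 + z/b_{m,L}) e^{−z/b_{m,L}}` (genus 1). -/
def PsiL (L : ℝ) (z : ℂ) : ℂ :=
  ∏' m : ℕ, (1 + z / (bmL L m : ℂ)) * Complex.exp (-z / (bmL L m : ℂ))

lemma bmL_zero {L : ℝ} (hL : 0 < L) : bmL L 0 = 1 := by
  simp [bmL, div_self (Real.Gamma_pos_of_pos hL).ne']

lemma bmL_succ {L : ℝ} (hL : 0 < L) (m : ℕ) :
    bmL L (m + 1) = bmL L m * ((m + 1) / (m + L)) := by
  have h1 : (0:ℝ) < L + m := by positivity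
  have h2 : Real.Gamma (L + (m + 1)) = (L + m) * Real.Gamma (L + m) := by
    rw [show L + ((m:ℝ) + 1) = (L + m) + 1 by ring, Real.Gamma_add_one h1.ne']
  have h3 : Real.Gamma (L + m) ≠ 0 := (Real.Gamma_pos_of_pos h1).ne'
  rw [bmL, bmL]
  push_cast [Nat.factorial_succ, h2]
  field_simp
  ring

lemma bmL_pos {L : ℝ} (hL : 0 < L) (m : ℕ) : 0 < bmL L m := by
  have h1 : (0:ℝ) < L + m := by positivity
  have := Real.Gamma_pos_of_pos hL
  have := Real.Gamma_pos_of_pos h1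
  have : (0:ℝ) < m.factorial := by positivity
  unfold bmL; positivity

/-- upper bound `b_m ≤ m^{1-L}/L` for `m ≥ 1`. -/
lemma bmL_le {L : ℝ} (hL0 : 0 < L) (hL : L < 1) {m : ℕ} (hm : 1 ≤ m) :
    bmL L m ≤ (m : ℝ) ^ (1 - L) / L := by
  induction m, hm using Nat.le_induction with
  | base =>
    rw [bmL_succ hL0 0, bmL_zero hL0]
    norm_num
  | succ m hm ih =>
    have hmpos : (0:ℝ) < m := by exact_mod_cast hm
    have hML : (0:ℝ) < m + L := by positivity
    have key2 : ((m:ℝ) + 1) ^ L * (m:ℝ) ^ (1 - L) ≤ m + L := by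
      have key : ((m:ℝ) + 1) ^ L * (m:ℝ) ^ (1 - L) ≤ L * ((m:ℝ) + 1) + (1 - L) * m :=
        Real.geom_mean_le_arith_mean2_weighted hL0.le (by linarith) (by positivity)
          hmpos.le (by ring)
      linarith
    have h3 : bmL L m * (((m:ℝ) + 1) / (m + L)) ≤ ((m:ℝ) ^ (1 - L) / L) * (((m:ℝ) + 1) / (m + L)) :=
      mul_le_mul_of_nonneg_right ih (by positivity)
    rw [bmL_succ hL0 m]
    push_cast
    refine h3.trans ?_
    rw [div_mul_div_comm, div_le_div_iff₀ (by positivity) hL0]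
    have h4 : ((m:ℝ) + 1) ^ (1 - L) * (((m:ℝ) + 1) ^ L * (m:ℝ) ^ (1 - L)) ≤
        ((m:ℝ) + 1) ^ (1 - L) * ((m:ℝ) + L) :=
      mul_le_mul_of_nonneg_left key2 (by positivity)
    have h5 : ((m:ℝ) + 1) ^ (1 - L) * ((m:ℝ) + 1) ^ L = (m:ℝ) + 1 := by
      rw [← Real.rpow_add (by positivity)]; norm_num
    have h6 : ((m:ℝ)+1) * (m:ℝ) ^ (1-L) ≤ ((m:ℝ) + 1) ^ (1 - L) * ((m:ℝ) + L) := by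
      rw [← mul_assoc, h5] at h4; exact h4
    nlinarith [h6, hL0]

/-- lower bound `(m+1)^{1-L} ≤ b_m`. -/
lemma bmL_ge {L : ℝ} (hL0 : 0 < L) (hL : L < 1) (m : ℕ) :
    ((m : ℝ) + 1) ^ (1 - L) ≤ bmL L m := by
  induction m with
  | zero => simp [bmL_zero hL0]
  | succ m ih =>
    have hML : (0:ℝ) < m + L := by positivity
    have h2L : (0:ℝ) < 2 - L := by linarith
    have key : ((m:ℝ) + L) ^ ((1:ℝ)/(2-L)) * ((m:ℝ) + 2) ^ ((1-L)/(2-L)) ≤ (m:ℝ) + 1 := by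
      have h := Real.geom_mean_le_arith_mean2_weighted
        (w₁ := 1/(2-L)) (w₂ := (1-L)/(2-L)) (p₁ := (m:ℝ)+L) (p₂ := (m:ℝ)+2)
        (by positivity) (div_nonneg (by linarith) (by linarith))
        hML.le (by positivity)
        (by field_simp; ring)
      refine h.trans_eq ?_
      field_simp
      ring
    have key2 : ((m:ℝ) + L) * ((m:ℝ) + 2) ^ (1 - L) ≤ ((m:ℝ) + 1) ^ (2 - L) := by
      have h := Real.rpow_le_rpow (by positivity) key h2L.le
      rw [Real.mul_rpow (by positivity) (by positivity),
        ← Real.rpow_mul hML.le, ← Real.rpow_mul (by positivity),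
        one_div_mul_cancel h2L.ne', div_mul_cancel₀ _ h2L.ne', Real.rpow_one] at h
      exact h
    rw [bmL_succ hL0 m]
    have step : ((m:ℝ) + 2) ^ (1 - L) ≤ ((m:ℝ) + 1) ^ (1 - L) * (((m:ℝ) + 1) / (m + L)) := by
      rw [mul_div_assoc', le_div_iff₀ hML]
      have h5 : ((m:ℝ) + 1) ^ (1 - L) * ((m:ℝ) + 1) = ((m:ℝ) + 1) ^ (2 - L) := by
        nth_rewrite 2 [← Real.rpow_one ((m:ℝ)+1)]
        rw [← Real.rpow_add (by positivity), show (1 - L + 1 : ℝ) = 2 - L by ring]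
      rw [h5]; linarith [key2]
    push_cast
    calc ((m:ℝ) + 1 + 1) ^ (1 - L) = ((m:ℝ) + 2) ^ (1-L) := by
          rw [show ((m:ℝ)+1+1) = (m:ℝ)+2 by ring]
      _ ≤ ((m:ℝ) + 1) ^ (1 - L) * (((m:ℝ) + 1) / (m + L)) := step
      _ ≤ bmL L m * (((m:ℝ) + 1) / (m + L)) :=
          mul_le_mul_of_nonneg_right ih (by positivity)

lemma div_ofReal (x y b : ℝ) (hb : b ≠ 0) :
    ((x:ℂ) + (y:ℂ)*I) / (b:ℂ) = ((x/b : ℝ):ℂ) + ((y/b : ℝ):ℂ)*I := by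
  have hb' : (b:ℂ) ≠ 0 := by exact_mod_cast hb
  push_cast
  field_simp

lemma abs_sq_eq (a v : ℝ) :
    (‖(1:ℂ) + (a:ℂ) + (v:ℂ)*I‖)^2 = (1+a)^2 + v^2 := by
  have h : (1:ℂ) + (a:ℂ) + (v:ℂ)*I = (((1+a : ℝ)):ℂ) + (v:ℂ)*I := by push_cast; ring
  rw [h, Complex.sq_norm, Complex.normSq_add_mul_I]

/-- key pointwise inequality: each factor has `log ≥ 0`. -/
lemma term_nonneg {a v : ℝ} (ha : a ≤ 0) (hv : 4*a^2 ≤ v^2) :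
    a ≤ Real.log (‖(1:ℂ) + (a:ℂ) + (v:ℂ)*I‖) := by
  set A := ‖(1:ℂ) + (a:ℂ) + (v:ℂ)*I‖ with hA
  have hA0 : 0 ≤ A := norm_nonneg _
  have hsq : A^2 = (1+a)^2 + v^2 := abs_sq_eq a v
  have h1a : (0:ℝ) < 1 - a := by linarith
  -- (A*(1-a))^2 ≥ 1
  have key : 1 ≤ (A*(1-a))^2 := by
    have : (A*(1-a))^2 = ((1+a)^2+v^2)*(1-a)^2 := by rw [mul_pow, hsq]
    rw [this]
    nlinarith [sq_nonneg a, sq_nonneg (a^2), mul_nonneg (sq_nonneg a) (neg_nonneg.2 ha),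
      mul_nonneg (sub_nonneg.2 hv) (sq_nonneg (1-a)), sub_nonneg.2 hv]
  have key2 : 1 ≤ A*(1-a) := by nlinarith [mul_nonneg hA0 h1a.le]
  -- exp a ≤ A
  have hexp : Real.exp a ≤ A := by
    have h2 : Real.exp a * (1-a) ≤ 1 := by
      have h3 := Real.add_one_le_exp (-a)
      have h4 : Real.exp a * Real.exp (-a) = 1 := by
        rw [← Real.exp_add]; simp
      nlinarith [Real.exp_pos a]
    calc Real.exp a = (Real.exp a * (1-a))/(1-a) := by field_simp
      _ ≤ 1/(1-a) := by gcongr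
      _ ≤ A := by rw [div_le_iff₀ h1a]; exact key2
  calc a = Real.log (Real.exp a) := (Real.log_exp a).symm
    _ ≤ Real.log A := Real.log_le_log (Real.exp_pos a) hexp

lemma term_log2 {a v : ℝ} (hv : 2 ≤ |v|) :
    Real.log 2 ≤ Real.log (‖(1:ℂ) + (a:ℂ) + (v:ℂ)*I‖) := by
  have him : ((1:ℂ) + (a:ℂ) + (v:ℂ)*I).im = v := by simp
  have h1 : |v| ≤ ‖(1:ℂ) + (a:ℂ) + (v:ℂ)*I‖ := by
    have := Complex.abs_im_le_norm ((1:ℂ) + (a:ℂ) + (v:ℂ)*I)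
    rwa [him] at this
  exact Real.log_le_log (by norm_num) (hv.trans h1)

/-- for fixed `0 < L < 1/2` and `ρ = 1/(1−L)`, there is a constant `c > 0`
(depending only on `ρ`) such that for every `x ≤ 0` there is a threshold `Y₀ > 0` with
`log |Ψ_L(x+iy)| ≥ c |y|^ρ` whenever `|y| ≥ max(2|x|, Y₀)`. -/
theorem statement17 (L : ℝ) (hL0 : 0 < L) (hL : L < 1/2)
    (ρ : ℝ) (hρ : ρ = 1 / (1 - L)) :
    ∃ c > (0 : ℝ), ∀ x : ℝ, x ≤ 0 → ∃ Y₀ > (0 : ℝ), ∀ y : ℝ,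
      max (2 * |x|) Y₀ ≤ |y| →
      c * |y| ^ ρ ≤ Real.log ‖PsiL L (x + y * Complex.I)‖ := by
  have hL1 : L < 1 := by linarith
  have h1L : (0:ℝ) < 1 - L := by linarith
  have hρ0 : 0 < ρ := by rw [hρ]; positivity
  have hlog2pos : 0 < Real.log 2 := Real.log_pos (by norm_num)
  refine ⟨(L/2)^ρ * Real.log 2,
    mul_pos (Real.rpow_pos_of_pos (by linarith) ρ) hlog2pos, ?_⟩
  intro x hx
  refine ⟨2, by norm_num, ?_⟩
  intro y hy
  have hy2 : (2:ℝ) ≤ |y| := le_trans (le_max_right _ _) hy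
  have hxy : 2*|x| ≤ |y| := le_trans (le_max_left _ _) hy
  have hyne : y ≠ 0 := by
    intro h; rw [h] at hy2; norm_num at hy2
  set b : ℕ → ℝ := bmL L with hb
  have hbpos : ∀ m, 0 < b m := bmL_pos hL0
  have hbge : ∀ m : ℕ, ((m:ℝ)+1)^(1-L) ≤ b m := bmL_ge hL0 hL1
  set z : ℂ := (x:ℂ) + (y:ℂ)*I with hz
  have hzw : ∀ m, z / ((b m : ℝ):ℂ) = (((x/b m : ℝ)):ℂ) + ((y/b m:ℝ):ℂ)*I :=
    fun m => div_ofReal x y (b m) (hbpos m).ne'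
  set g : ℕ → ℂ := fun m => Complex.log (1 + z/((b m:ℝ):ℂ)) - z/((b m:ℝ):ℂ) with hgdef
  have hne : ∀ m, (1:ℂ) + z/((b m:ℝ):ℂ) ≠ 0 := by
    intro m h
    have h2 : ((1:ℂ) + z/((b m:ℝ):ℂ)).im = 0 := by rw [h]; simp
    rw [hzw m] at h2
    simp only [Complex.add_im, Complex.one_im, Complex.ofReal_im, Complex.mul_im,
      Complex.ofReal_re, Complex.I_im, Complex.I_re, mul_one, mul_zero] at h2
    have : y / b m = 0 := by linarith
    exact hyne ((div_eq_zero_iff.1 this).resolve_right (hbpos m).ne')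
  -- norms of w
  have hwnorm : ∀ m, ‖z/((b m:ℝ):ℂ)‖ = ‖z‖/(b m) := by
    intro m
    rw [norm_div, Complex.norm_real, Real.norm_eq_abs, abs_of_pos (hbpos m)]
  -- summability of g
  have hsum_maj : Summable (fun m : ℕ => ‖z‖^2 * (((m:ℝ)+1)^(2-2*L))⁻¹) := by
    apply Summable.mul_left
    have h0 : Summable (fun m : ℕ => ((m:ℝ)^(2-2*L))⁻¹) :=
      Real.summable_nat_rpow_inv.2 (by linarith)
    have h1 := (summable_nat_add_iff 1).2 h0
    refine h1.congr fun m => ?_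
    push_cast
    norm_num
  have htend : Tendsto (fun m : ℕ => ((m:ℝ)+1)^(1-L)) atTop atTop :=
    (tendsto_rpow_atTop h1L).comp
      (tendsto_atTop_add_const_right _ 1 tendsto_natCast_atTop_atTop)
  have hev : ∀ᶠ m in atTop, ‖z/((b m:ℝ):ℂ)‖ ≤ 1/2 := by
    filter_upwards [htend.eventually_ge_atTop (2*‖z‖)] with m hm
    rw [hwnorm m, div_le_iff₀ (hbpos m)]
    have : 2*‖z‖ ≤ b m := hm.trans (hbge m)
    linarith
  have hgsum : Summable g := by
    apply Summable.of_norm_bounded_eventually hsum_maj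
    rw [Nat.cofinite_eq_atTop]
    filter_upwards [hev] with m hm
    set t := ‖z/((b m:ℝ):ℂ)‖ with ht
    have ht0 : 0 ≤ t := norm_nonneg _
    have h1 : t < 1 := lt_of_le_of_lt hm (by norm_num)
    have h2 := Complex.norm_log_one_add_sub_self_le h1
    have h3 : (1-t)⁻¹ ≤ 2 := by
      have h4 : ((2:ℝ))⁻¹ ≤ 1 - t := by norm_num; linarith
      calc (1-t)⁻¹ ≤ ((2:ℝ)⁻¹)⁻¹ := by
            apply inv_anti₀ (by norm_num) h4
        _ = 2 := by norm_num
    have hsq : ((m:ℝ)+1)^(2-2*L) ≤ (b m)^2 := by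
      have h5 : (((m:ℝ)+1)^(1-L))^2 ≤ (b m)^2 :=
        pow_le_pow_left₀ (by positivity) (hbge m) 2
      calc ((m:ℝ)+1)^(2-2*L) = (((m:ℝ)+1)^(1-L))^2 := by
            rw [← Real.rpow_natCast (((m:ℝ)+1)^(1-L)) 2, ← Real.rpow_mul (by positivity)]
            norm_num; ring_nf
        _ ≤ (b m)^2 := h5
    calc ‖g m‖ ≤ t^2 * (1-t)⁻¹/2 := h2
      _ ≤ t^2 := by nlinarith [sq_nonneg t]
      _ = ‖z‖^2/(b m)^2 := by rw [ht, hwnorm m, div_pow]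
      _ ≤ ‖z‖^2 * (((m:ℝ)+1)^(2-2*L))⁻¹ := by
          rw [div_eq_mul_inv]
          gcongr
  -- the product
  have hfac : ∀ m : ℕ, (1 + z/((b m:ℝ):ℂ)) * Complex.exp (-z/((b m:ℝ):ℂ)) = Complex.exp (g m) := by
    intro m
    rw [hgdef]
    simp only []
    rw [sub_eq_add_neg, Complex.exp_add, Complex.exp_log (hne m), neg_div]
  have hprod : HasProd (fun m => (1 + z/((b m:ℝ):ℂ)) * Complex.exp (-z/((b m:ℝ):ℂ)))
      (Complex.exp (∑' m, g m)) := by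
    have h1 : Tendsto (fun s : Finset ℕ => Complex.exp (∑ i ∈ s, g i)) atTop
        (𝓝 (Complex.exp (∑' m, g m))) :=
      (Complex.continuous_exp.tendsto _).comp hgsum.hasSum
    have h2 : (fun s : Finset ℕ => ∏ i ∈ s, (1 + z/((b i:ℝ):ℂ)) * Complex.exp (-z/((b i:ℝ):ℂ)))
        = fun s : Finset ℕ => Complex.exp (∑ i ∈ s, g i) := by
      funext s
      rw [Complex.exp_sum]
      exact Finset.prod_congr rfl fun i _ => hfac i
    show Tendsto _ atTop (𝓝 _)
    rw [h2]
    exact h1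
  have hPsi : PsiL L z = Complex.exp (∑' m, g m) := by
    rw [PsiL]
    exact hprod.tprod_eq
  rw [hPsi, Complex.norm_exp, Real.log_exp]
  have hre : (∑' m, g m).re = ∑' m, (g m).re := Complex.re_tsum hgsum
  rw [hre]
  -- summability of real parts
  have hgre_sum : Summable (fun m => (g m).re) := by
    have h1 := (hgsum.hasSum.mapL Complex.reCLM).summable
    exact h1.congr fun m => rfl
  -- formula for re
  have hgre_eq : ∀ m, (g m).re =
      Real.log (‖(1:ℂ) + ((x/b m:ℝ):ℂ) + ((y/b m:ℝ):ℂ)*I‖) - x/b m := by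
    intro m
    rw [hgdef]
    simp only [Complex.sub_re]
    rw [hzw m, ← add_assoc, Complex.log_re]
    congr 1
    simp
  have hxb : ∀ m, x / b m ≤ 0 := fun m => div_nonpos_of_nonpos_of_nonneg hx (hbpos m).le
  have h4x : 4*x^2 ≤ y^2 := by
    have h1 : (2*|x|)^2 ≤ |y|^2 := by
      apply pow_le_pow_left₀ (by positivity) hxy
    rw [mul_pow, _root_.sq_abs, _root_.sq_abs] at h1
    linarith
  have hnonneg : ∀ m, 0 ≤ (g m).re := by
    intro m
    rw [hgre_eq m]
    have hv : 4*(x/b m)^2 ≤ (y/b m)^2 := by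
      rw [div_pow, div_pow, ← mul_div_assoc]
      gcongr
    have ht := term_nonneg (hxb m) hv
    linarith
  -- counting
  set T := (L*|y|/2)^ρ with hT
  set M : ℕ := ⌊T⌋₊ + 1 with hM
  have hT0 : (0:ℝ) ≤ T := Real.rpow_nonneg (by positivity) ρ
  have hbM : ∀ m < M, b m ≤ |y|/2 := by
    intro m hm
    match m with
    | 0 =>
      rw [hb, bmL_zero hL0]; linarith
    | (k+1 : ℕ) =>
      have h2 : bmL L (k+1) ≤ ((k+1:ℕ):ℝ)^(1-L)/L :=
        bmL_le hL0 hL1 (Nat.succ_le_succ (Nat.zero_le k))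
      have h3 : ((k+1:ℕ):ℝ) ≤ T := by
        have h3a : k+1 ≤ ⌊T⌋₊ := Nat.lt_succ_iff.1 hm
        calc ((k+1:ℕ):ℝ) ≤ (⌊T⌋₊:ℝ) := by exact_mod_cast h3a
          _ ≤ T := Nat.floor_le hT0
      have h4 : ((k+1:ℕ):ℝ)^(1-L) ≤ T^(1-L) :=
        Real.rpow_le_rpow (by positivity) h3 h1L.le
      have h5 : T^(1-L) = L*|y|/2 := by
        rw [hT, ← Real.rpow_mul (by positivity),
          show ρ*(1-L) = 1 by rw [hρ]; field_simp, Real.rpow_one]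
      show bmL L (k+1) ≤ |y|/2
      calc bmL L (k+1) ≤ ((k+1:ℕ):ℝ)^(1-L)/L := h2
        _ ≤ T^(1-L)/L := by gcongr
        _ = (L*|y|/2)/L := by rw [h5]
        _ = |y|/2 := by field_simp
  have hlog2 : ∀ m < M, Real.log 2 ≤ (g m).re := by
    intro m hm
    rw [hgre_eq m]
    have h1 : (2:ℝ) ≤ |y/b m| := by
      rw [abs_div, abs_of_pos (hbpos m), le_div_iff₀ (hbpos m)]
      linarith [hbM m hm]
    have h2 := term_log2 (a := x/b m) h1
    linarith [hxb m]
  have hcount : ((L/2)^ρ * Real.log 2) * |y|^ρ ≤ (M:ℝ) * Real.log 2 := by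
    have h1 : (L/2)^ρ * |y|^ρ = T := by
      rw [hT, ← Real.mul_rpow (by positivity) (abs_nonneg y)]
      congr 1
      ring
    have h2 : T ≤ (M:ℝ) := by
      rw [hM]; push_cast; linarith [Nat.lt_floor_add_one T]
    calc ((L/2)^ρ * Real.log 2) * |y|^ρ = ((L/2)^ρ * |y|^ρ) * Real.log 2 := by ring
      _ = T * Real.log 2 := by rw [h1]
      _ ≤ (M:ℝ) * Real.log 2 := mul_le_mul_of_nonneg_right h2 hlog2pos.le
  have hfin : (M:ℝ) * Real.log 2 ≤ ∑ m ∈ Finset.range M, (g m).re := by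
    have h1 := Finset.card_nsmul_le_sum (Finset.range M) (fun m => (g m).re) (Real.log 2)
      (fun i hi => hlog2 i (Finset.mem_range.1 hi))
    simpa [Finset.card_range, nsmul_eq_mul] using h1
  have hts : ∑ m ∈ Finset.range M, (g m).re ≤ ∑' m, (g m).re :=
    Summable.sum_le_tsum _ (fun i _ => hnonneg i) hgre_sum
  linarith
end
end

section
/- Fix 0 < L < 1/2. Then lim_{r→1⁻} ∑_{m=0}^∞ a_{m,L}² · (m·(1−r²) − L·r²)² · r^{4m} = L² · Γ(1−2L)/Γ(1−L)². -/
open Filter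

noncomputable section

open Set MeasureTheory

namespace S19

/-- the coefficient `a_{m,L}` -/
def aa (L : ℝ) (m : ℕ) : ℝ := Real.Gamma (L + m) / (Real.Gamma L * m.factorial)

variable {L : ℝ}

lemma aa_pos (hL0 : 0 < L) (m : ℕ) : 0 < aa L m := by
  unfold aa
  have h1 : 0 < Real.Gamma (L + m) := Real.Gamma_pos_of_pos (by positivity)
  have h2 : 0 < Real.Gamma L := Real.Gamma_pos_of_pos hL0
  positivity

lemma aa_zero (hL0 : 0 < L) : aa L 0 = 1 := by
  have hΓ : Real.Gamma L ≠ 0 := ne_of_gt (Real.Gamma_pos_of_pos hL0)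
  simp [aa]
  exact hΓ

lemma aa_succ (hL0 : 0 < L) (m : ℕ) :
    aa L (m + 1) = aa L m * ((L + m) / (m + 1)) := by
  have hne : L + (m : ℝ) ≠ 0 := by positivity
  have h1 : Real.Gamma (L + (m + 1 : ℕ)) = (L + m) * Real.Gamma (L + m) := by
    push_cast
    rw [show L + ((m : ℝ) + 1) = (L + m) + 1 by ring, Real.Gamma_add_one hne]
  have h2 : ((m + 1 : ℕ).factorial : ℝ) = (m + 1) * m.factorial := by
    rw [Nat.factorial_succ]; push_cast; ring
  rw [aa, aa, h1, h2]
  have hΓ : Real.Gamma L ≠ 0 := ne_of_gt (Real.Gamma_pos_of_pos hL0)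
  have hf : (m.factorial : ℝ) ≠ 0 := by positivity
  field_simp

lemma aa_rec (hL0 : 0 < L) (m : ℕ) :
    ((m : ℝ) + 1) * aa L (m + 1) = (L + m) * aa L m := by
  rw [aa_succ hL0 m]
  have : ((m : ℝ) + 1) ≠ 0 := by positivity
  field_simp

lemma aa_le_one (hL0 : 0 < L) (hL1 : L ≤ 1) (m : ℕ) : aa L m ≤ 1 := by
  induction m with
  | zero => rw [aa_zero hL0]
  | succ n ih =>
    rw [aa_succ hL0 n]
    have h1 : (L + n) / (n + 1 : ℝ) ≤ 1 := by
      rw [div_le_one (by positivity)]; linarith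
    calc aa L n * ((L + n) / (n + 1)) ≤ 1 * 1 :=
          mul_le_mul ih h1 (by positivity) zero_le_one
      _ = 1 := by ring

lemma summable_aux {b : ℝ} (hb0 : 0 ≤ b) (hb : b < 1) :
    Summable (fun m : ℕ => ((m : ℝ) + 1) * b ^ m) := by
  have h1 : Summable (fun m : ℕ => (m : ℝ) * b ^ m) := by
    simpa using summable_pow_mul_geometric_of_norm_lt_one 1
      (r := b) (by rwa [Real.norm_eq_abs, abs_of_nonneg hb0])
  have h2 : Summable (fun m : ℕ => b ^ m) := summable_geometric_of_lt_one hb0 hb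
  simpa [add_mul] using h1.add h2

lemma summable_aa_mul (hL0 : 0 < L) (hL1 : L ≤ 1) {x : ℝ} (hx : |x| < 1) :
    Summable (fun m : ℕ => aa L m * x ^ m) := by
  apply Summable.of_norm_bounded (summable_aux (abs_nonneg x) hx)
  intro m
  rw [Real.norm_eq_abs, abs_mul, abs_of_pos (aa_pos hL0 m), abs_pow]
  calc aa L m * |x| ^ m ≤ 1 * |x| ^ m := by
        apply mul_le_mul_of_nonneg_right (aa_le_one hL0 hL1 m) (by positivity)
    _ ≤ ((m : ℝ) + 1) * |x| ^ m := by
        have : (0:ℝ) ≤ m := Nat.cast_nonneg m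
        apply mul_le_mul_of_nonneg_right (by linarith) (by positivity)

/-- The binomial series. -/
lemma hasSum_binomial (hL0 : 0 < L) (hL1 : L ≤ 1) {x : ℝ} (hx : |x| < 1) :
    HasSum (fun m : ℕ => aa L m * x ^ m) ((1 - x) ^ (-L) : ℝ) := by
  set b : ℝ := (|x| + 1) / 2 with hbdef
  have hxb : |x| < b := by rw [hbdef]; linarith
  have hb0 : 0 ≤ b := by positivity
  have hb1 : b < 1 := by rw [hbdef]; linarith
  set t : Set ℝ := Ioo (-b) b with htdef
  have hxt : x ∈ t := by
    constructor
    · linarith [neg_abs_le x]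
    · linarith [le_abs_self x]
  have h0t : (0 : ℝ) ∈ t :=
    ⟨by simp only [neg_lt, neg_zero]; linarith [abs_nonneg x], by linarith [abs_nonneg x]⟩
  have ht_open : IsOpen t := isOpen_Ioo
  have ht_conn : IsPreconnected t := (convex_Ioo _ _).isPreconnected
  -- summable bound for derivatives
  have hu : Summable (fun m : ℕ => ((m : ℝ) + 1) * b ^ m) := summable_aux hb0 hb1
  -- derivative of each term
  have hderiv : ∀ (n : ℕ), ∀ y ∈ t, HasDerivAt (fun z : ℝ => aa L n * z ^ n)
      (aa L n * (n * y ^ (n - 1))) y := by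
    intro n y _
    exact (hasDerivAt_pow n y).const_mul (aa L n)
  have hbound : ∀ (n : ℕ), ∀ y ∈ t, ‖aa L n * (n * y ^ (n - 1))‖ ≤ ((n : ℝ) + 1) * b ^ (n - 1) :=
    by
    intro n y hy
    have hyb : |y| ≤ b := by
      rw [abs_le]; exact ⟨le_of_lt hy.1, le_of_lt hy.2⟩
    rw [Real.norm_eq_abs, abs_mul, abs_mul, abs_of_pos (aa_pos hL0 n), Nat.abs_cast, abs_pow]
    calc aa L n * ((n : ℝ) * |y| ^ (n - 1)) ≤ 1 * (((n : ℝ) + 1) * b ^ (n - 1)) := by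
          apply mul_le_mul (aa_le_one hL0 hL1 n)
          · apply mul_le_mul (by linarith) (pow_le_pow_left₀ (abs_nonneg y) hyb _)
              (by positivity) (by positivity)
          · positivity
          · norm_num
      _ = ((n : ℝ) + 1) * b ^ (n - 1) := by ring
  have hb0' : 0 < b := by rw [hbdef]; linarith [abs_nonneg x]
  have hu' : Summable (fun n : ℕ => ((n : ℝ) + 1) * b ^ (n - 1)) := by
    apply Summable.of_norm_bounded (hu.mul_left b⁻¹)
    intro n
    rw [Real.norm_eq_abs]
    have hkey : b ^ (n - 1) ≤ b⁻¹ * b ^ n := by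
      cases n with
      | zero =>
        simp only [Nat.zero_sub, pow_zero]
        rw [mul_one]
        exact (one_le_inv₀ hb0').mpr (le_of_lt hb1)
      | succ k =>
        simp only [Nat.add_sub_cancel, pow_succ]
        rw [mul_comm (b ^ k) b, ← mul_assoc, inv_mul_cancel₀ (ne_of_gt hb0'), one_mul]
    calc |((n:ℝ)+1) * b ^ (n-1)| = ((n:ℝ)+1) * b ^ (n-1) := by
          rw [abs_of_nonneg]; positivity
      _ ≤ ((n:ℝ)+1) * (b⁻¹ * b ^ n) := by
          apply mul_le_mul_of_nonneg_left hkey (by positivity)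
      _ = b⁻¹ * (((n:ℝ)+1) * b ^ n) := by ring
  have hsum0 : Summable (fun n : ℕ => aa L n * (0:ℝ) ^ n) := by
    apply summable_of_ne_finset_zero (s := {0})
    intro n hn
    simp only [Finset.mem_singleton] at hn
    rw [zero_pow hn, mul_zero]
  -- the sum function
  set g : ℝ → ℝ := fun z => ∑' n : ℕ, aa L n * z ^ n with hgdef
  have hgderiv : ∀ y ∈ t, HasDerivAt g (∑' n : ℕ, aa L n * (n * y ^ (n - 1))) y :=
    fun y hy => hasDerivAt_tsum_of_isPreconnected hu' ht_open ht_conn hderiv hbound h0t hsum0 hy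
  -- the ODE : (1-y) g' = L g on t
  have hODE : ∀ y ∈ t, (1 - y) * (∑' n : ℕ, aa L n * (n * y ^ (n - 1))) = L * g y := by
    intro y hy
    have hyabs : |y| < 1 := lt_trans (abs_lt.2 ⟨hy.1, hy.2⟩) hb1
    have s1 : Summable (fun n : ℕ => aa L n * (n * y ^ (n - 1))) :=
      Summable.of_norm_bounded hu' (fun n => hbound n y hy)
    have s3 : Summable (fun n : ℕ => aa L n * y ^ n) := summable_aa_mul hL0 hL1 hyabs
    have s4 : Summable (fun n : ℕ => (n : ℝ) * aa L n * y ^ n) := by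
      apply (s1.mul_right y).congr
      intro n
      cases n with
      | zero => simp
      | succ k =>
        simp only [Nat.add_sub_cancel]
        push_cast
        rw [pow_succ]
        ring
    have s5 : Summable (fun n : ℕ => (L + (n : ℝ)) * aa L n * y ^ n) := by
      apply ((s3.mul_left L).add s4).congr
      intro n; ring
    have hyD : y * (∑' n : ℕ, aa L n * (n * y ^ (n - 1)))
        = ∑' n : ℕ, (n : ℝ) * aa L n * y ^ n := by
      rw [← tsum_mul_left]
      apply tsum_congr
      intro n
      cases n with
      | zero => simp
      | succ k =>
        simp only [Nat.add_sub_cancel]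
        push_cast
        rw [pow_succ]
        ring
    have hD : (∑' n : ℕ, aa L n * (n * y ^ (n - 1)))
        = ∑' n : ℕ, (L + (n : ℝ)) * aa L n * y ^ n := by
      rw [Summable.tsum_eq_zero_add s1]
      simp only [Nat.cast_zero, zero_mul, mul_zero, zero_add]
      apply tsum_congr
      intro n
      simp only [Nat.add_sub_cancel]
      have := aa_rec hL0 n
      push_cast
      calc aa L (n + 1) * (((n:ℝ) + 1) * y ^ n) = (((n:ℝ) + 1) * aa L (n + 1)) * y ^ n := by ring
        _ = (L + (n:ℝ)) * aa L n * y ^ n := by rw [this]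
    have expand : (1 - y) * (∑' n : ℕ, aa L n * (n * y ^ (n - 1)))
        = (∑' n : ℕ, (L + (n : ℝ)) * aa L n * y ^ n) - ∑' n : ℕ, (n : ℝ) * aa L n * y ^ n := by
      rw [sub_mul, one_mul, hyD, hD]
    rw [expand, ← Summable.tsum_sub s5 s4]
    rw [hgdef]
    simp only
    rw [← tsum_mul_left]
    apply tsum_congr
    intro n
    ring
  -- constancy of F y = g y * (1-y)^L
  set F : ℝ → ℝ := fun y => g y * (1 - y) ^ L with hFdef
  have hF : ∀ y ∈ t, HasDerivAt F 0 y := by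
    intro y hy
    have h1y : (0:ℝ) < 1 - y := by have := hy.2; linarith
    have hg' := hgderiv y hy
    have hin : HasDerivAt (fun z : ℝ => 1 - z) (-1) y := by
      simpa using (hasDerivAt_id y).const_sub 1
    have hrp : HasDerivAt (fun z : ℝ => (1 - z) ^ L)
        (L * (1 - y) ^ (L - 1) * (-1)) y :=
      (Real.hasDerivAt_rpow_const (Or.inl (ne_of_gt h1y))).comp y hin
    have hmul := hg'.mul hrp
    refine hmul.congr_deriv ?_
    have hode := hODE y hy
    have hpow : (1 - y) ^ L = (1 - y) ^ (L - 1) * (1 - y) := by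
      nth_rewrite 1 [show L = (L - 1) + 1 by ring]
      rw [Real.rpow_add h1y, Real.rpow_one]
    rw [hpow]
    have : (∑' (n : ℕ), aa L n * (↑n * y ^ (n - 1))) * ((1 - y) ^ (L - 1) * (1 - y))
        + g y * (L * (1 - y) ^ (L - 1) * (-1))
        = (1 - y) ^ (L - 1) * ((1 - y) * (∑' (n : ℕ), aa L n * (↑n * y ^ (n - 1))) - L * g y) := by
      ring
    rw [this, hode]
    ring
  have hconst : F x = F 0 := by
    apply (convex_Ioo (-b) b).is_const_of_fderivWithin_eq_zero
      (fun y hy => ((hF y hy).differentiableAt).differentiableWithinAt) _ hxt h0t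
    intro y hy
    rw [fderivWithin_of_isOpen ht_open hy, (hF y hy).hasFDerivAt.fderiv]
    ext z
    simp
  have hF0 : F 0 = 1 := by
    rw [hFdef]
    simp only [sub_zero, Real.one_rpow, mul_one]
    rw [hgdef]
    simp only
    rw [tsum_eq_single 0 (fun n hn => by rw [zero_pow hn, mul_zero])]
    simp [aa_zero hL0]
  have h1x : (0:ℝ) < 1 - x := by
    have := lt_of_le_of_lt (le_abs_self x) hx; linarith
  have hgx : g x = (1 - x) ^ (-L) := by
    have hA : (0:ℝ) < (1 - x) ^ L := Real.rpow_pos_of_pos h1x L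
    have hcon : g x * (1 - x) ^ L = 1 := by
      have h2 := hconst
      rw [hF0] at h2
      exact h2
    rw [Real.rpow_neg (le_of_lt h1x), inv_eq_one_div, eq_div_iff (ne_of_gt hA)]
    exact hcon
  have hs := (summable_aa_mul hL0 hL1 hx).hasSum
  have heq : (∑' (n : ℕ), aa L n * x ^ n) = (1 - x) ^ (-L) := hgx
  rwa [heq] at hs

/-- pointwise equality of complex and real beta integrands on `Ioo 0 1` -/
lemma integrand_eq {c d : ℝ} {x : ℝ} (hx : x ∈ Ioo (0:ℝ) 1) :
    (x : ℂ) ^ ((c : ℂ) - 1) * (1 - (x : ℂ)) ^ ((d : ℂ) - 1)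
      = ((x ^ (c - 1) * (1 - x) ^ (d - 1) : ℝ) : ℂ) := by
  have hx0 : (0:ℝ) ≤ x := le_of_lt hx.1
  have hx1 : (0:ℝ) ≤ 1 - x := by linarith [hx.2]
  rw [Complex.ofReal_mul, Complex.ofReal_cpow hx0, Complex.ofReal_cpow hx1]
  push_cast
  ring

lemma betaReal_integrable {c d : ℝ} (hc : 0 < c) (hd : 0 < d) :
    IntegrableOn (fun x : ℝ => x ^ (c - 1) * (1 - x) ^ (d - 1)) (Ioo 0 1) volume := by
  have hC := Complex.betaIntegral_convergent (u := (c:ℂ)) (v := (d:ℂ))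
    (by simpa using hc) (by simpa using hd)
  have hC2 : IntegrableOn (fun x : ℝ => (x : ℂ) ^ ((c:ℂ) - 1) * (1 - (x:ℂ)) ^ ((d:ℂ) - 1))
      (Ioo 0 1) volume :=
    ((intervalIntegrable_iff_integrableOn_Ioc_of_le zero_le_one).mp hC).mono_set
      Ioo_subset_Ioc_self
  have hC3 : IntegrableOn (fun x : ℝ => ((x ^ (c - 1) * (1 - x) ^ (d - 1) : ℝ) : ℂ))
      (Ioo 0 1) volume := by
    apply hC2.congr_fun (fun x hx => integrand_eq hx) measurableSet_Ioo
  have h4 : IntegrableOn (fun x : ℝ => RCLike.re ((x ^ (c - 1) * (1 - x) ^ (d - 1) : ℝ) : ℂ))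
      (Ioo 0 1) volume := hC3.re
  apply h4.congr_fun _ measurableSet_Ioo
  intro x _
  simp

lemma betaReal_value {c d : ℝ} (hc : 0 < c) (hd : 0 < d) :
    Real.Gamma c * Real.Gamma d
      = Real.Gamma (c + d) * ∫ x in Ioo (0:ℝ) 1, x ^ (c - 1) * (1 - x) ^ (d - 1) := by
  have key := Complex.Gamma_mul_Gamma_eq_betaIntegral (s := (c:ℂ)) (t := (d:ℂ))
    (by simpa using hc) (by simpa using hd)
  rw [Complex.betaIntegral] at key
  rw [intervalIntegral.integral_of_le zero_le_one] at key
  rw [MeasureTheory.integral_Ioc_eq_integral_Ioo] at key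
  have hIoo : (∫ x in Ioo (0:ℝ) 1, (x : ℂ) ^ ((c:ℂ) - 1) * (1 - (x:ℂ)) ^ ((d:ℂ) - 1))
      = ((∫ x in Ioo (0:ℝ) 1, x ^ (c - 1) * (1 - x) ^ (d - 1) : ℝ) : ℂ) := by
    calc (∫ x in Ioo (0:ℝ) 1, (x : ℂ) ^ ((c:ℂ) - 1) * (1 - (x:ℂ)) ^ ((d:ℂ) - 1))
        = ∫ x in Ioo (0:ℝ) 1, ((x ^ (c - 1) * (1 - x) ^ (d - 1) : ℝ) : ℂ) :=
          setIntegral_congr_fun measurableSet_Ioo (fun x hx => integrand_eq hx)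
      _ = ((∫ x in Ioo (0:ℝ) 1, x ^ (c - 1) * (1 - x) ^ (d - 1) : ℝ) : ℂ) := integral_ofReal
  rw [hIoo] at key
  have hcast : ((c : ℂ) + (d : ℂ)) = ((c + d : ℝ) : ℂ) := by push_cast; ring
  rw [hcast, Complex.Gamma_ofReal, Complex.Gamma_ofReal, Complex.Gamma_ofReal] at key
  exact_mod_cast key

/-- Gauss's theorem for `₂F₁(L,L;1;1)`. -/
lemma hasSum_aa_sq (hL0 : 0 < L) (hL : L < 1/2) :
    HasSum (fun m : ℕ => aa L m ^ 2)
      (Real.Gamma (1 - 2*L) / Real.Gamma (1 - L) ^ 2) := by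
  have hL1 : L < 1 := by linarith
  have h2L : 0 < 1 - 2*L := by linarith
  have h1L : 0 < 1 - L := by linarith
  have hΓL : 0 < Real.Gamma L := Real.Gamma_pos_of_pos hL0
  have hΓ1L : 0 < Real.Gamma (1 - L) := Real.Gamma_pos_of_pos h1L
  have hΓ2L : 0 < Real.Gamma (1 - 2*L) := Real.Gamma_pos_of_pos h2L
  -- integrands
  set gI : ℕ → ℝ → ℝ := fun i t => aa L i * (t ^ (L + i - 1) * (1 - t) ^ ((1 - L) - 1))
    with hgIdef
  set tot : ℝ → ℝ := fun t => t ^ (L - 1) * (1 - t) ^ ((1 - 2*L) - 1) with htotdef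
  have hgI_nonneg : ∀ i, ∀ t ∈ Ioo (0:ℝ) 1, 0 ≤ gI i t := by
    intro i t ht
    have h1 : (0:ℝ) < t := ht.1
    have h2 : (0:ℝ) < 1 - t := by linarith [ht.2]
    have := aa_pos hL0 (L := L) i
    have p1 : (0:ℝ) < t ^ (L + i - 1) := Real.rpow_pos_of_pos h1 _
    have p2 : (0:ℝ) < (1 - t) ^ ((1 - L) - 1) := Real.rpow_pos_of_pos h2 _
    positivity
  -- pointwise sum identity on Ioo 0 1
  have hpointwise : ∀ t ∈ Ioo (0:ℝ) 1, HasSum (fun i => gI i t) (tot t) := by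
    intro t ht
    have h1 : (0:ℝ) < t := ht.1
    have h2 : (0:ℝ) < 1 - t := by linarith [ht.2]
    have habs : |t| < 1 := by rw [abs_of_pos h1]; linarith
    have hbin := hasSum_binomial hL0 (le_of_lt hL1) habs
    have hmul := hbin.mul_left (t ^ (L - 1) * (1 - t) ^ (-L))
    have heq : ∀ i : ℕ, t ^ (L - 1) * (1 - t) ^ (-L) * (aa L i * t ^ i) = gI i t := by
      intro i
      rw [hgIdef]
      simp only
      have : t ^ (L + (i:ℝ) - 1) = t ^ (L - 1) * t ^ (i:ℕ) := by
        rw [← Real.rpow_natCast t i, ← Real.rpow_add h1]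
        congr 1
        ring
      rw [show (1 - L) - 1 = -L by ring, this]
      ring
    have hval : t ^ (L - 1) * (1 - t) ^ (-L) * (1 - t) ^ (-L) = tot t := by
      rw [htotdef]
      simp only
      rw [mul_assoc, ← Real.rpow_add h2]
      congr 1
      ring
    rw [hval] at hmul
    exact hmul.congr_fun (fun i => (heq i).symm)
  -- integrability
  have hInt_i : ∀ i : ℕ, IntegrableOn (fun t => gI i t) (Ioo 0 1) volume := by
    intro i
    have h := betaReal_integrable (c := L + i) (d := 1 - L) (by positivity) h1L
    exact h.const_mul (aa L i)
  have hInt_tot : IntegrableOn tot (Ioo 0 1) volume := betaReal_integrable hL0 h2L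
  have htot_nonneg : ∀ t ∈ Ioo (0:ℝ) 1, 0 ≤ tot t := by
    intro t ht
    have h1 : (0:ℝ) < t := ht.1
    have h2 : (0:ℝ) < 1 - t := by linarith [ht.2]
    have p1 : (0:ℝ) < t ^ (L - 1) := Real.rpow_pos_of_pos h1 _
    have p2 : (0:ℝ) < (1 - t) ^ ((1 - 2*L) - 1) := Real.rpow_pos_of_pos h2 _
    positivity
  -- values of the individual integrals
  have hval_i : ∀ i : ℕ, (∫ t in Ioo (0:ℝ) 1, gI i t)
      = aa L i ^ 2 * (Real.Gamma L * Real.Gamma (1 - L)) := by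
    intro i
    have hb := betaReal_value (c := L + i) (d := 1 - L) (by positivity) h1L
    have hfac : Real.Gamma (L + i + (1 - L)) = (i.factorial : ℝ) := by
      rw [show L + (i:ℝ) + (1 - L) = (i:ℝ) + 1 by ring, Real.Gamma_nat_eq_factorial]
    rw [hfac] at hb
    have hint : ∫ t in Ioo (0:ℝ) 1, gI i t
        = aa L i * ∫ t in Ioo (0:ℝ) 1, t ^ (L + i - 1) * (1 - t) ^ ((1 - L) - 1) := by
      rw [hgIdef]
      exact integral_const_mul _ _
    have hfne : (i.factorial : ℝ) ≠ 0 := by positivity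
    have hΓLne : Real.Gamma L ≠ 0 := ne_of_gt hΓL
    have haai : Real.Gamma (L + i) = aa L i * (Real.Gamma L * i.factorial) := by
      rw [aa]; field_simp
    rw [haai] at hb
    rw [hint]
    have hI : (∫ t in Ioo (0:ℝ) 1, t ^ (L + i - 1) * (1 - t) ^ ((1 - L) - 1))
        = aa L i * (Real.Gamma L * Real.Gamma (1 - L)) := by
      apply mul_left_cancel₀ hfne
      linear_combination -hb
    rw [hI]
    ring
  have hval_tot : (∫ t in Ioo (0:ℝ) 1, tot t)
      = Real.Gamma L * Real.Gamma (1 - 2*L) / Real.Gamma (1 - L) := by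
    have hb := betaReal_value (c := L) (d := 1 - 2*L) hL0 h2L
    rw [show L + (1 - 2*L) = 1 - L by ring] at hb
    rw [eq_div_iff (ne_of_gt hΓ1L)]
    rw [htotdef]
    linear_combination hb.symm
  -- lintegral versions
  set FI : ℕ → ENNReal := fun i => ∫⁻ t in Ioo (0:ℝ) 1, ENNReal.ofReal (gI i t) with hFIdef
  have hmeas : ∀ i : ℕ, AEMeasurable (fun t => ENNReal.ofReal (gI i t))
      (volume.restrict (Ioo (0:ℝ) 1)) := by
    intro i
    apply Measurable.aemeasurable
    apply Measurable.ennreal_ofReal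
    rw [hgIdef]
    fun_prop
  have hswap : ∑' i, FI i = ∫⁻ t in Ioo (0:ℝ) 1, ENNReal.ofReal (tot t) := by
    rw [hFIdef]
    simp only
    rw [← lintegral_tsum hmeas]
    apply setLIntegral_congr_fun measurableSet_Ioo
    intro t ht
    simp only
    rw [← ENNReal.ofReal_tsum_of_nonneg (fun i => hgI_nonneg i t ht)
      ((hpointwise t ht).summable), (hpointwise t ht).tsum_eq]
  have htot_lint : (∫⁻ t in Ioo (0:ℝ) 1, ENNReal.ofReal (tot t))
      = ENNReal.ofReal (Real.Gamma L * Real.Gamma (1 - 2*L) / Real.Gamma (1 - L)) := by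
    rw [← ofReal_integral_eq_lintegral_ofReal hInt_tot
      ((ae_restrict_iff' measurableSet_Ioo).mpr (ae_of_all _ htot_nonneg))]
    rw [hval_tot]
  have hFi_val : ∀ i : ℕ, FI i
      = ENNReal.ofReal (aa L i ^ 2 * (Real.Gamma L * Real.Gamma (1 - L))) := by
    intro i
    rw [hFIdef]
    simp only
    rw [← ofReal_integral_eq_lintegral_ofReal (hInt_i i)
      ((ae_restrict_iff' measurableSet_Ioo).mpr (ae_of_all _ (hgI_nonneg i)))]
    rw [hval_i i]
  -- extract real summability and value
  set K : ℝ := Real.Gamma L * Real.Gamma (1 - L) with hKdef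
  have hK : 0 < K := by positivity
  set C : ℝ := Real.Gamma L * Real.Gamma (1 - 2*L) / Real.Gamma (1 - L) with hCdef
  have hC : 0 ≤ C := by positivity
  have hsumFI : ∑' i, FI i = ENNReal.ofReal C := hswap.trans htot_lint
  have hne : ∑' i, FI i ≠ ⊤ := by rw [hsumFI]; exact ENNReal.ofReal_ne_top
  have hci_nonneg : ∀ i : ℕ, 0 ≤ aa L i ^ 2 * K := by
    intro i; positivity
  have hsummable : Summable (fun i : ℕ => aa L i ^ 2 * K) := by
    apply (ENNReal.summable_toReal hne).congr
    intro i
    rw [hFi_val i, ENNReal.toReal_ofReal (hci_nonneg i)]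
  have htsum : ∑' i : ℕ, aa L i ^ 2 * K = C := by
    have h1 : ∑' i : ℕ, aa L i ^ 2 * K = ∑' i : ℕ, (FI i).toReal := by
      apply tsum_congr
      intro i
      rw [hFi_val i, ENNReal.toReal_ofReal (hci_nonneg i)]
    rw [h1, ← ENNReal.tsum_toReal_eq (fun i => by rw [hFi_val i]; exact ENNReal.ofReal_ne_top),
      hsumFI, ENNReal.toReal_ofReal hC]
  have hHS : HasSum (fun i : ℕ => aa L i ^ 2 * K) C := hsummable.hasSum_iff.mpr htsum
  have hdiv := hHS.div_const K
  have hfun : (fun i : ℕ => aa L i ^ 2 * K / K) = fun i : ℕ => aa L i ^ 2 := by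
    funext i
    rw [mul_div_cancel_right₀ _ (ne_of_gt hK)]
  rw [hfun] at hdiv
  have hCK : C / K = Real.Gamma (1 - 2*L) / Real.Gamma (1 - L) ^ 2 := by
    rw [hCdef, hKdef]
    field_simp
  rwa [hCK] at hdiv

/-- key elementary bound : `m (1-x) x^m ≤ 1` for `0 < x ≤ 1`. -/
lemma key_bound {x : ℝ} (hx0 : 0 < x) (hx1 : x ≤ 1) (m : ℕ) :
    (m : ℝ) * (1 - x) * x ^ m ≤ 1 := by
  have h1 : (1 - x) / x ≥ 0 := div_nonneg (by linarith) (le_of_lt hx0)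
  have h2 : (1 + (1 - x) / x) = 1 / x := by field_simp; ring
  have h3 : (1 : ℝ) + (m : ℝ) * ((1 - x) / x) ≤ (1 + (1 - x) / x) ^ m :=
    one_add_mul_le_pow (by linarith) m
  rw [h2] at h3
  have h4 : (m : ℝ) * (1 - x) ≤ (1 / x) ^ m := by
    have h6 : (1 - x) ≤ (1 - x) / x := by
      rw [le_div_iff₀ hx0]
      nlinarith
    have h5 : (m : ℝ) * (1 - x) ≤ (m : ℝ) * ((1 - x) / x) :=
      mul_le_mul_of_nonneg_left h6 (Nat.cast_nonneg m)
    calc (m : ℝ) * (1 - x) ≤ (m : ℝ) * ((1 - x) / x) := h5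
      _ ≤ 1 + (m : ℝ) * ((1 - x) / x) := by linarith
      _ ≤ (1 / x) ^ m := h3
  calc (m : ℝ) * (1 - x) * x ^ m ≤ (1 / x) ^ m * x ^ m := by
        apply mul_le_mul_of_nonneg_right h4 (by positivity)
    _ = 1 := by
        rw [div_pow, one_pow, div_mul_eq_mul_div, div_eq_one_iff_eq (by positivity)]
        ring

end S19

/-- for fixed `0 < L < 1/2`,
`lim_{r→1⁻} ∑_m a_{m,L}² (m(1−r²) − Lr²)² r^{4m} = L² Γ(1−2L)/Γ(1−L)².` -/
theorem statement19 (L : ℝ) (hL0 : 0 < L) (hL : L < 1/2)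
    (a : ℕ → ℝ) (ha : ∀ m, a m = Real.Gamma (L + m) / (Real.Gamma L * m.factorial)) :
    Tendsto
      (fun r : ℝ => ∑' m : ℕ, a m ^ 2 * (m * (1 - r ^ 2) - L * r ^ 2) ^ 2 * r ^ (4 * m))
      (nhdsWithin 1 (Set.Iio 1))
      (nhds (L ^ 2 * Real.Gamma (1 - 2 * L) / Real.Gamma (1 - L) ^ 2)) := by
  have haa : a = S19.aa L := by funext m; rw [ha m]; rfl
  subst haa
  have hGauss := S19.hasSum_aa_sq hL0 hL
  have hSummable : Summable (fun m : ℕ => S19.aa L m ^ 2) := hGauss.summable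
  -- the limit of each term
  have hlim : Tendsto
      (fun r : ℝ => ∑' m : ℕ, S19.aa L m ^ 2 * (m * (1 - r ^ 2) - L * r ^ 2) ^ 2 * r ^ (4 * m))
      (nhdsWithin 1 (Set.Iio 1))
      (nhds (∑' m : ℕ, S19.aa L m ^ 2 * L ^ 2)) := by
    apply tendsto_tsum_of_dominated_convergence
      (bound := fun m : ℕ => (1 + L) ^ 2 * S19.aa L m ^ 2)
    · exact hSummable.mul_left _
    · intro m
      have hc : Continuous
          (fun r : ℝ => S19.aa L m ^ 2 * (m * (1 - r ^ 2) - L * r ^ 2) ^ 2 * r ^ (4 * m)) := by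
        fun_prop
      have ht : Tendsto
          (fun r : ℝ => S19.aa L m ^ 2 * (m * (1 - r ^ 2) - L * r ^ 2) ^ 2 * r ^ (4 * m))
          (nhdsWithin 1 (Set.Iio 1))
          (nhds (S19.aa L m ^ 2 * ((m : ℝ) * (1 - 1 ^ 2) - L * 1 ^ 2) ^ 2 * 1 ^ (4 * m))) :=
        (hc.tendsto 1).mono_left nhdsWithin_le_nhds
      convert ht using 2
      norm_num
    · filter_upwards [Ioo_mem_nhdsLT_of_mem (show (1:ℝ) ∈ Ioc (0:ℝ) 1 by constructor <;> norm_num)]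
        with r hr m
      have hr0 : 0 < r := hr.1
      have hr1 : r < 1 := hr.2
      set x : ℝ := r ^ 2 with hxdef
      have hx0 : 0 < x := by positivity
      have hx1 : x < 1 := by
        rw [hxdef]
        nlinarith
      -- rewrite powers
      have hpow : r ^ (4 * m) = (x ^ m) ^ 2 := by
        rw [hxdef, ← pow_mul, ← pow_mul]
        congr 1
        ring
      have hxm0 : (0:ℝ) < x ^ m := by positivity
      have habs : |((m : ℝ) * (1 - x) - L * x) * x ^ m| ≤ 1 + L := by
        rw [abs_mul, abs_of_pos hxm0]
        have h1 : |(m : ℝ) * (1 - x) - L * x| ≤ (m : ℝ) * (1 - x) + L * x := by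
          have e1 : (0:ℝ) ≤ (m : ℝ) * (1 - x) := mul_nonneg (Nat.cast_nonneg m) (by linarith)
          have e2 : (0:ℝ) ≤ L * x := by positivity
          rw [abs_le]
          constructor <;> linarith [abs_nonneg ((m:ℝ)*(1-x) - L*x), le_abs_self ((m:ℝ)*(1-x) - L*x), neg_abs_le ((m:ℝ)*(1-x) - L*x)]
        calc |(m:ℝ)*(1-x) - L*x| * x ^ m ≤ ((m:ℝ)*(1-x) + L*x) * x ^ m :=
              mul_le_mul_of_nonneg_right h1 (le_of_lt hxm0)
          _ = (m:ℝ)*(1-x)*x^m + L*(x*x^m) := by ring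
          _ ≤ 1 + L * 1 := by
              have hk := S19.key_bound hx0 (le_of_lt hx1) m
              have hxx : x * x ^ m ≤ 1 := by
                have hp : x ^ (m+1) ≤ 1 := pow_le_one₀ (le_of_lt hx0) (le_of_lt hx1)
                calc x * x ^ m = x ^ (m+1) := by ring
                  _ ≤ 1 := hp
              have := mul_le_mul_of_nonneg_left hxx (le_of_lt hL0)
              linarith
          _ = 1 + L := by ring
      rw [Real.norm_eq_abs]
      have hrw : S19.aa L m ^ 2 * ((m : ℝ) * (1 - x) - L * x) ^ 2 * r ^ (4 * m)
          = S19.aa L m ^ 2 * (((m : ℝ) * (1 - x) - L * x) * x ^ m) ^ 2 := by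
        rw [hpow]; ring
      rw [hrw]
      have hab := abs_le.mp habs
      calc |S19.aa L m ^ 2 * (((m:ℝ)*(1-x)-L*x) * x^m)^2|
          = S19.aa L m ^ 2 * (((m:ℝ)*(1-x)-L*x) * x^m)^2 := abs_of_nonneg (by positivity)
        _ ≤ S19.aa L m ^ 2 * (1+L)^2 := by
            apply mul_le_mul_of_nonneg_left _ (sq_nonneg _)
            exact sq_le_sq' hab.1 hab.2
        _ = (1+L)^2 * S19.aa L m ^ 2 := by ring
  have hval : (∑' m : ℕ, S19.aa L m ^ 2 * L ^ 2)
      = L ^ 2 * Real.Gamma (1 - 2 * L) / Real.Gamma (1 - L) ^ 2 := by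
    rw [tsum_mul_right, hGauss.tsum_eq]
    ring
  rwa [hval] at hlim
end
end
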